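/- arXiv:2512.03021 — 4 statements merged into one kernel-verified Lean document; each statement's English description precedes it below -/
import Mathlib

section
/- Let 𝕂 : ℝ → ℝ be twice continuously differentiable and bounded with ‖𝕂''‖∞ < ∞. Then the FFT/binned kernel density estimator satisfies max_{1≤i≤n} |f̃^FFT(Y_i) − f̃^exact(Y_i)| ≤ (1/4)·‖𝕂''‖∞·Δ²/h³, and moreover sup_{y∈[x₀,x_{M−1}]} |f̃^FFT(y) − f̃^exact(y)| ≤ (1/4)·‖𝕂''‖∞·Δ²/h³, where f̃^FFT is extended off the grid by linear interpolation. -/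
open intervalIntegral in
lemma lip_aux (g : ℝ → ℝ) (B : ℝ) (hg : Differentiable ℝ g)
    (hB : ∀ u, |deriv g u| ≤ B) (a b : ℝ) : |g b - g a| ≤ B * |b - a| := by
  rcases lt_trichotomy a b with hab | hab | hab
  · obtain ⟨c, _, hc⟩ := exists_hasDerivAt_eq_slope g (deriv g) hab
      (hg.continuous.continuousOn) (fun x _ => (hg x).hasDerivAt)
    have : g b - g a = deriv g c * (b - a) := by
      rw [eq_div_iff (sub_ne_zero.mpr hab.ne')] at hc; linarith [hc]
    rw [this, abs_mul]
    exact mul_le_mul_of_nonneg_right (hB c) (abs_nonneg _)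
  · simp [hab]
  · obtain ⟨c, _, hc⟩ := exists_hasDerivAt_eq_slope g (deriv g) hab
      (hg.continuous.continuousOn) (fun x _ => (hg x).hasDerivAt)
    have : g a - g b = deriv g c * (a - b) := by
      rw [eq_div_iff (sub_ne_zero.mpr hab.ne')] at hc; linarith [hc]
    have h2 : |g b - g a| = |g a - g b| := abs_sub_comm _ _
    have h3 : |b - a| = |a - b| := abs_sub_comm _ _
    rw [h2, h3, this, abs_mul]
    exact mul_le_mul_of_nonneg_right (hB c) (abs_nonneg _)

lemma taylor1_aux (g : ℝ → ℝ) (B : ℝ) (hg : ContDiff ℝ 2 g)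
    (hB : ∀ u, |deriv (deriv g) u| ≤ B) (ξ x : ℝ) :
    |g x - g ξ - deriv g ξ * (x - ξ)| ≤ B / 2 * (x - ξ) ^ 2 := by
  have hd1 : Differentiable ℝ g := hg.differentiable (by norm_num)
  have hg' : ContDiff ℝ 1 (deriv g) :=
    ((contDiff_succ_iff_deriv (n := 1)).mp (hg.of_le (by norm_num))).2.2
  have hd2 : Differentiable ℝ (deriv g) := hg'.differentiable (by norm_num)
  have hcont : Continuous (deriv g) := hd2.continuous
  have hL : ∀ s, |deriv g s - deriv g ξ| ≤ B * |s - ξ| :=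
    fun s => lip_aux (deriv g) B hd2 hB ξ s
  have hint : IntervalIntegrable (deriv g) MeasureTheory.volume ξ x :=
    hcont.intervalIntegrable _ _
  have key : g x - g ξ - deriv g ξ * (x - ξ)
      = ∫ s in ξ..x, (deriv g s - deriv g ξ) := by
    rw [intervalIntegral.integral_sub hint (intervalIntegrable_const)]
    rw [intervalIntegral.integral_deriv_eq_sub (fun s _ => hd1 s) hint]
    rw [intervalIntegral.integral_const]
    simp [smul_eq_mul]; ring
  rw [key]
  rcases le_or_gt ξ x with hle | hlt
  · calc |∫ s in ξ..x, (deriv g s - deriv g ξ)|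
        ≤ ∫ s in ξ..x, |deriv g s - deriv g ξ| :=
          intervalIntegral.abs_integral_le_integral_abs hle
      _ ≤ ∫ s in ξ..x, B * (s - ξ) := by
          apply intervalIntegral.integral_mono_on hle
          · exact ((hcont.sub continuous_const).abs).intervalIntegrable _ _
          · exact (Continuous.intervalIntegrable (by continuity) _ _)
          · intro s hs
            have := hL s
            rwa [abs_of_nonneg (by linarith [hs.1] : (0:ℝ) ≤ s - ξ)] at this
      _ = B / 2 * (x - ξ) ^ 2 := by
          rw [intervalIntegral.integral_const_mul]
          have : (∫ s in ξ..x, (s - ξ)) = (x - ξ) ^ 2 / 2 := by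
            rw [intervalIntegral.integral_sub (f := fun s : ℝ => s) (g := fun _ => ξ)
              (Continuous.intervalIntegrable (by continuity) _ _) intervalIntegrable_const]
            simp [integral_id, intervalIntegral.integral_const, smul_eq_mul]; ring
          rw [this]; ring
  · have hsymm : |∫ s in ξ..x, (deriv g s - deriv g ξ)|
        = |∫ s in x..ξ, (deriv g s - deriv g ξ)| := by
      rw [intervalIntegral.integral_symm]; rw [abs_neg]
    rw [hsymm]
    calc |∫ s in x..ξ, (deriv g s - deriv g ξ)|
        ≤ ∫ s in x..ξ, |deriv g s - deriv g ξ| :=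
          intervalIntegral.abs_integral_le_integral_abs hlt.le
      _ ≤ ∫ s in x..ξ, B * (ξ - s) := by
          apply intervalIntegral.integral_mono_on hlt.le
          · exact ((hcont.sub continuous_const).abs).intervalIntegrable _ _
          · exact (Continuous.intervalIntegrable (by continuity) _ _)
          · intro s hs
            have := hL s
            rwa [abs_of_nonpos (by linarith [hs.2] : s - ξ ≤ 0), neg_sub] at this
      _ = B / 2 * (x - ξ) ^ 2 := by
          rw [intervalIntegral.integral_const_mul]
          have : (∫ s in x..ξ, (ξ - s)) = (ξ - x) ^ 2 / 2 := by
            rw [intervalIntegral.integral_sub (f := fun _ => ξ) (g := fun s : ℝ => s)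
              intervalIntegrable_const (Continuous.intervalIntegrable (by continuity) _ _)]
            simp [integral_id, intervalIntegral.integral_const, smul_eq_mul]; ring
          rw [this]; ring

lemma interp_aux (g : ℝ → ℝ) (B : ℝ) (hg : ContDiff ℝ 2 g)
    (hB : ∀ u, |deriv (deriv g) u| ≤ B) (p q t : ℝ) (ht0 : 0 ≤ t) (ht1 : t ≤ 1) :
    |(1 - t) * g p + t * g q - g ((1 - t) * p + t * q)| ≤ B / 8 * (q - p) ^ 2 := by
  have hB0 : 0 ≤ B := le_trans (abs_nonneg _) (hB 0)
  set ξ := (1 - t) * p + t * q with hξ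
  have e1 := taylor1_aux g B hg hB ξ p
  have e2 := taylor1_aux g B hg hB ξ q
  have hid : (1 - t) * g p + t * g q - g ξ
      = (1 - t) * (g p - g ξ - deriv g ξ * (p - ξ))
        + t * (g q - g ξ - deriv g ξ * (q - ξ)) := by
    rw [hξ]; ring
  rw [hid]
  have h1 : |(1 - t) * (g p - g ξ - deriv g ξ * (p - ξ))
      + t * (g q - g ξ - deriv g ξ * (q - ξ))|
      ≤ (1 - t) * |g p - g ξ - deriv g ξ * (p - ξ)|
        + t * |g q - g ξ - deriv g ξ * (q - ξ)| := by
    calc _ ≤ |(1 - t) * (g p - g ξ - deriv g ξ * (p - ξ))|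
        + |t * (g q - g ξ - deriv g ξ * (q - ξ))| := abs_add_le _ _
      _ = _ := by rw [abs_mul, abs_mul, abs_of_nonneg (by linarith), abs_of_nonneg ht0]
  have hp2 : (p - ξ) ^ 2 = t ^ 2 * (q - p) ^ 2 := by rw [hξ]; ring
  have hq2 : (q - ξ) ^ 2 = (1 - t) ^ 2 * (q - p) ^ 2 := by rw [hξ]; ring
  have hD : 0 ≤ (q - p) ^ 2 := sq_nonneg _
  calc _ ≤ (1 - t) * |g p - g ξ - deriv g ξ * (p - ξ)|
        + t * |g q - g ξ - deriv g ξ * (q - ξ)| := h1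
    _ ≤ (1 - t) * (B / 2 * (p - ξ) ^ 2) + t * (B / 2 * (q - ξ) ^ 2) :=
        add_le_add (mul_le_mul_of_nonneg_left e1 (by linarith))
          (mul_le_mul_of_nonneg_left e2 ht0)
    _ ≤ B / 8 * (q - p) ^ 2 := by
        rw [hp2, hq2]
        nlinarith [mul_nonneg (mul_nonneg hB0 hD) (sq_nonneg (2 * t - 1)),
          mul_nonneg (mul_nonneg (mul_nonneg ht0 (by linarith : (0:ℝ) ≤ 1 - t)) hB0) hD]

open Finset

/-- Lemma 1 of the paper: the FFT/binned kernel density estimator (linear binning on a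
uniform grid, grid convolution, and linear interpolation off the grid) differs from the
exact weighted KDE by at most `(1/4)·‖𝕂''‖∞·Δ²/h³`, both at the data points and uniformly
on the grid interval. -/
theorem stmt_0
    (n : ℕ) (Y : Fin n → ℝ) (ω : Fin n → ℝ)
    (hω : ∀ i, 0 ≤ ω i) (hωsum : ∑ i, ω i = 1)
    (h : ℝ) (hh : 0 < h)
    (K : ℝ → ℝ) (hK : ContDiff ℝ 2 K)
    (Kbd : ℝ) (hKbd : ∀ u, |K u| ≤ Kbd)
    (C2 : ℝ) (hC2 : ∀ u, |deriv (deriv K) u| ≤ C2)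
    (M : ℕ) (hM : 2 ≤ M)
    (x0 Δ : ℝ) (hΔ : 0 < Δ)
    (hY : ∀ i, Y i ∈ Set.Ico x0 (x0 + ((M : ℝ) - 1) * Δ))
    (Kh : ℝ → ℝ) (hKh : ∀ u, Kh u = h⁻¹ * K (u / h))
    (fexact : ℝ → ℝ) (hfex : ∀ y, fexact y = ∑ i, ω i * Kh (y - Y i))
    (grid : ℕ → ℝ) (hgrid : ∀ m, grid m = x0 + m * Δ)
    (c : ℕ → ℝ)
    (hc : ∀ m, c m = ∑ i, ω i *
      ((if m = ⌊(Y i - x0) / Δ⌋₊ then 1 - ((Y i - x0) / Δ - ⌊(Y i - x0) / Δ⌋₊) else 0)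
        + (if m = ⌊(Y i - x0) / Δ⌋₊ + 1 then (Y i - x0) / Δ - ⌊(Y i - x0) / Δ⌋₊ else 0)))
    (fbin : ℝ → ℝ) (hfbin : ∀ y, fbin y = ∑ m ∈ range M, c m * Kh (y - grid m))
    (fFFT : ℝ → ℝ)
    (hfFFT : ∀ y, fFFT y =
      (1 - ((y - x0) / Δ - ⌊(y - x0) / Δ⌋₊)) * fbin (grid ⌊(y - x0) / Δ⌋₊)
        + ((y - x0) / Δ - ⌊(y - x0) / Δ⌋₊) * fbin (grid (⌊(y - x0) / Δ⌋₊ + 1))) :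
    (∀ i, |fFFT (Y i) - fexact (Y i)| ≤ 1 / 4 * C2 * Δ ^ 2 / h ^ 3) ∧
    (∀ y ∈ Set.Icc x0 (x0 + ((M : ℝ) - 1) * Δ),
      |fFFT y - fexact y| ≤ 1 / 4 * C2 * Δ ^ 2 / h ^ 3) := by
  -- Smoothness and second-derivative bound for `Kh`
  have hKhfun : Kh = fun u => h⁻¹ * K (u / h) := funext hKh
  have hKC : ContDiff ℝ 2 Kh := by
    rw [hKhfun]; exact contDiff_const.mul (hK.comp (contDiff_id.div_const h))
  have hKdiff : Differentiable ℝ K := hK.differentiable (by norm_num)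
  have hK1 : ContDiff ℝ 1 (deriv K) :=
    ((contDiff_succ_iff_deriv (n := 1)).mp (hK.of_le (by norm_num))).2.2
  have hKdiff2 : Differentiable ℝ (deriv K) := hK1.differentiable (by norm_num)
  have hKd1 : deriv Kh = fun u => h⁻¹ * (deriv K (u / h) * (1 / h)) := by
    funext u
    have h1 : HasDerivAt (fun v : ℝ => v / h) (1 / h) u := by
      simpa using (hasDerivAt_id u).div_const h
    have h2 : HasDerivAt K (deriv K (u / h)) (u / h) := (hKdiff (u / h)).hasDerivAt
    have h3 := (h2.comp u h1).const_mul h⁻¹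
    have e : deriv (fun u : ℝ => h⁻¹ * K (u / h)) u
        = h⁻¹ * (deriv K (u / h) * (1 / h)) := HasDerivAt.deriv (by exact h3)
    rw [hKhfun, e]
  have hKd2 : ∀ u, deriv (deriv Kh) u
      = h⁻¹ * (deriv (deriv K) (u / h) * (1 / h) * (1 / h)) := by
    intro u
    rw [hKd1]
    have h1 : HasDerivAt (fun v : ℝ => v / h) (1 / h) u := by
      simpa using (hasDerivAt_id u).div_const h
    have h2 : HasDerivAt (deriv K) (deriv (deriv K) (u / h)) (u / h) :=
      (hKdiff2 (u / h)).hasDerivAt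
    have h3 := ((h2.comp u h1).mul_const (1 / h)).const_mul h⁻¹
    exact HasDerivAt.deriv (by exact h3)
  have hB : ∀ u, |deriv (deriv Kh) u| ≤ C2 / h ^ 3 := by
    intro u
    rw [hKd2]
    have hrw : h⁻¹ * (deriv (deriv K) (u / h) * (1 / h) * (1 / h))
        = deriv (deriv K) (u / h) / h ^ 3 := by
      ring
    rw [hrw, abs_div, abs_of_pos (pow_pos hh 3)]
    gcongr
    exact hC2 _
  have hC2nn : 0 ≤ C2 := le_trans (abs_nonneg _) (hC2 0)
  -- Facts about the bins of the data points
  have hfacts : ∀ i, (0 ≤ (Y i - x0) / Δ - (⌊(Y i - x0) / Δ⌋₊ : ℝ)) ∧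
      ((Y i - x0) / Δ - (⌊(Y i - x0) / Δ⌋₊ : ℝ) ≤ 1) ∧ ⌊(Y i - x0) / Δ⌋₊ + 1 < M := by
    intro i
    have h0 : x0 ≤ Y i := (hY i).1
    have h1 : Y i < x0 + ((M : ℝ) - 1) * Δ := (hY i).2
    have hr0 : 0 ≤ (Y i - x0) / Δ := div_nonneg (by linarith) hΔ.le
    have hfl : (⌊(Y i - x0) / Δ⌋₊ : ℝ) ≤ (Y i - x0) / Δ := Nat.floor_le hr0
    have hlt : (Y i - x0) / Δ < (⌊(Y i - x0) / Δ⌋₊ : ℝ) + 1 := Nat.lt_floor_add_one _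
    refine ⟨by linarith, by linarith, ?_⟩
    have hM1 : (1 : ℕ) ≤ M := by omega
    have hcast : ((M - 1 : ℕ) : ℝ) = (M : ℝ) - 1 := by
      rw [Nat.cast_sub hM1, Nat.cast_one]
    have hrlt : (Y i - x0) / Δ < ((M - 1 : ℕ) : ℝ) := by
      rw [hcast, div_lt_iff₀ hΔ]; linarith
    have := (Nat.floor_lt hr0).mpr hrlt
    omega
  -- Rewriting fbin as a sum over data points
  have hfbin' : ∀ x : ℝ, fbin x = ∑ i, ω i *
      ((1 - ((Y i - x0) / Δ - (⌊(Y i - x0) / Δ⌋₊ : ℝ))) * Kh (x - grid ⌊(Y i - x0) / Δ⌋₊)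
        + ((Y i - x0) / Δ - (⌊(Y i - x0) / Δ⌋₊ : ℝ)) * Kh (x - grid (⌊(Y i - x0) / Δ⌋₊ + 1))) := by
    intro x
    rw [hfbin]
    simp only [hc, Finset.sum_mul]
    rw [Finset.sum_comm]
    refine Finset.sum_congr rfl fun i _ => ?_
    have hj : ⌊(Y i - x0) / Δ⌋₊ ∈ range M := mem_range.mpr (by have := (hfacts i).2.2; omega)
    have hj1 : ⌊(Y i - x0) / Δ⌋₊ + 1 ∈ range M := mem_range.mpr (hfacts i).2.2
    have hsummand : ∀ m, ω i *
        ((if m = ⌊(Y i - x0) / Δ⌋₊ then 1 - ((Y i - x0) / Δ - ⌊(Y i - x0) / Δ⌋₊) else 0)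
          + (if m = ⌊(Y i - x0) / Δ⌋₊ + 1 then (Y i - x0) / Δ - ⌊(Y i - x0) / Δ⌋₊ else 0))
          * Kh (x - grid m)
        = (if m = ⌊(Y i - x0) / Δ⌋₊ then
            ω i * ((1 - ((Y i - x0) / Δ - (⌊(Y i - x0) / Δ⌋₊ : ℝ))) * Kh (x - grid m)) else 0)
          + (if m = ⌊(Y i - x0) / Δ⌋₊ + 1 then
            ω i * (((Y i - x0) / Δ - (⌊(Y i - x0) / Δ⌋₊ : ℝ)) * Kh (x - grid m)) else 0) := by
      intro m
      split_ifs <;> ring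
    simp only [hsummand]
    rw [Finset.sum_add_distrib, Finset.sum_ite_eq' (range M), Finset.sum_ite_eq' (range M),
      if_pos hj, if_pos hj1]
    ring
  -- The key pointwise interpolation bound
  have keybound : ∀ u v w z s a : ℝ, 0 ≤ s → s ≤ 1 → 0 ≤ a → a ≤ 1 →
      v - u = Δ → z - w = Δ → ∀ yy YY : ℝ,
      yy = (1 - s) * u + s * v → YY = (1 - a) * w + a * z →
      |((1 - s) * ((1 - a) * Kh (u - w) + a * Kh (u - z))
        + s * ((1 - a) * Kh (v - w) + a * Kh (v - z))) - Kh (yy - YY)|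
        ≤ C2 / h ^ 3 / 4 * Δ ^ 2 := by
    intro u v w z s a hs0 hs1 ha0 ha1 huv hwz yy YY hyy hYY
    have i1 := interp_aux Kh (C2 / h ^ 3) hKC hB (u - w) (v - w) s hs0 hs1
    have i2 := interp_aux Kh (C2 / h ^ 3) hKC hB (u - z) (v - z) s hs0 hs1
    have i3 := interp_aux Kh (C2 / h ^ 3) hKC hB (yy - w) (yy - z) a ha0 ha1
    have r1 : (1 - s) * (u - w) + s * (v - w) = yy - w := by rw [hyy]; ring
    have r2 : (1 - s) * (u - z) + s * (v - z) = yy - z := by rw [hyy]; ring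
    have r3 : (1 - a) * (yy - w) + a * (yy - z) = yy - YY := by rw [hYY]; ring
    have q1 : (v - w - (u - w)) ^ 2 = Δ ^ 2 := by rw [← huv]; ring
    have q2 : (v - z - (u - z)) ^ 2 = Δ ^ 2 := by rw [← huv]; ring
    have q3 : (yy - z - (yy - w)) ^ 2 = Δ ^ 2 := by rw [← hwz]; ring
    rw [r1, q1] at i1
    rw [r2, q2] at i2
    rw [r3, q3] at i3
    have hident : ((1 - s) * ((1 - a) * Kh (u - w) + a * Kh (u - z))
        + s * ((1 - a) * Kh (v - w) + a * Kh (v - z))) - Kh (yy - YY)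
        = (1 - a) * ((1 - s) * Kh (u - w) + s * Kh (v - w) - Kh (yy - w))
          + a * ((1 - s) * Kh (u - z) + s * Kh (v - z) - Kh (yy - z))
          + ((1 - a) * Kh (yy - w) + a * Kh (yy - z) - Kh (yy - YY)) := by ring
    rw [hident]
    have hBD : 0 ≤ C2 / h ^ 3 / 8 * Δ ^ 2 := by positivity
    calc |(1 - a) * ((1 - s) * Kh (u - w) + s * Kh (v - w) - Kh (yy - w))
          + a * ((1 - s) * Kh (u - z) + s * Kh (v - z) - Kh (yy - z))
          + ((1 - a) * Kh (yy - w) + a * Kh (yy - z) - Kh (yy - YY))|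
        ≤ |(1 - a) * ((1 - s) * Kh (u - w) + s * Kh (v - w) - Kh (yy - w))
            + a * ((1 - s) * Kh (u - z) + s * Kh (v - z) - Kh (yy - z))|
          + |(1 - a) * Kh (yy - w) + a * Kh (yy - z) - Kh (yy - YY)| := abs_add_le _ _
      _ ≤ |(1 - a) * ((1 - s) * Kh (u - w) + s * Kh (v - w) - Kh (yy - w))|
          + |a * ((1 - s) * Kh (u - z) + s * Kh (v - z) - Kh (yy - z))|
          + |(1 - a) * Kh (yy - w) + a * Kh (yy - z) - Kh (yy - YY)| := by
            have := abs_add_le ((1 - a) * ((1 - s) * Kh (u - w) + s * Kh (v - w) - Kh (yy - w)))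
              (a * ((1 - s) * Kh (u - z) + s * Kh (v - z) - Kh (yy - z)))
            linarith
      _ ≤ (1 - a) * (C2 / h ^ 3 / 8 * Δ ^ 2) + a * (C2 / h ^ 3 / 8 * Δ ^ 2)
          + C2 / h ^ 3 / 8 * Δ ^ 2 := by
            rw [abs_mul, abs_mul, abs_of_nonneg (by linarith : (0:ℝ) ≤ 1 - a),
              abs_of_nonneg ha0]
            have b1 := mul_le_mul_of_nonneg_left i1 (by linarith : (0:ℝ) ≤ 1 - a)
            have b2 := mul_le_mul_of_nonneg_left i2 ha0
            linarith
      _ ≤ C2 / h ^ 3 / 4 * Δ ^ 2 := by nlinarith [hBD]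
  -- The uniform bound, for every point to the right of the grid origin
  have main : ∀ y : ℝ, x0 ≤ y → |fFFT y - fexact y| ≤ 1 / 4 * C2 * Δ ^ 2 / h ^ 3 := by
    intro y hy
    have hr0 : 0 ≤ (y - x0) / Δ := div_nonneg (by linarith) hΔ.le
    have ht0 : 0 ≤ (y - x0) / Δ - (⌊(y - x0) / Δ⌋₊ : ℝ) := by
      have := Nat.floor_le hr0; linarith
    have ht1 : (y - x0) / Δ - (⌊(y - x0) / Δ⌋₊ : ℝ) ≤ 1 := by
      have := Nat.lt_floor_add_one ((y - x0) / Δ); linarith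
    have hdm : (y - x0) / Δ * Δ = y - x0 := div_mul_cancel₀ _ hΔ.ne'
    have hyrep : y = (1 - ((y - x0) / Δ - (⌊(y - x0) / Δ⌋₊ : ℝ))) * grid ⌊(y - x0) / Δ⌋₊
        + ((y - x0) / Δ - (⌊(y - x0) / Δ⌋₊ : ℝ)) * grid (⌊(y - x0) / Δ⌋₊ + 1) := by
      rw [hgrid, hgrid]; push_cast; linear_combination -hdm
    have hstep : ∀ m : ℕ, grid (m + 1) - grid m = Δ := by
      intro m; rw [hgrid, hgrid]; push_cast; ring
    have hYrep : ∀ i, Y i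
        = (1 - ((Y i - x0) / Δ - (⌊(Y i - x0) / Δ⌋₊ : ℝ))) * grid ⌊(Y i - x0) / Δ⌋₊
          + ((Y i - x0) / Δ - (⌊(Y i - x0) / Δ⌋₊ : ℝ)) * grid (⌊(Y i - x0) / Δ⌋₊ + 1) := by
      intro i
      have hdm' : (Y i - x0) / Δ * Δ = Y i - x0 := div_mul_cancel₀ _ hΔ.ne'
      rw [hgrid, hgrid]; push_cast; linear_combination -hdm'
    have hdiffsum : fFFT y - fexact y = ∑ i, ω i *
        (((1 - ((y - x0) / Δ - (⌊(y - x0) / Δ⌋₊ : ℝ)))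
            * ((1 - ((Y i - x0) / Δ - (⌊(Y i - x0) / Δ⌋₊ : ℝ)))
                * Kh (grid ⌊(y - x0) / Δ⌋₊ - grid ⌊(Y i - x0) / Δ⌋₊)
              + ((Y i - x0) / Δ - (⌊(Y i - x0) / Δ⌋₊ : ℝ))
                * Kh (grid ⌊(y - x0) / Δ⌋₊ - grid (⌊(Y i - x0) / Δ⌋₊ + 1)))
          + ((y - x0) / Δ - (⌊(y - x0) / Δ⌋₊ : ℝ))
            * ((1 - ((Y i - x0) / Δ - (⌊(Y i - x0) / Δ⌋₊ : ℝ)))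
                * Kh (grid (⌊(y - x0) / Δ⌋₊ + 1) - grid ⌊(Y i - x0) / Δ⌋₊)
              + ((Y i - x0) / Δ - (⌊(Y i - x0) / Δ⌋₊ : ℝ))
                * Kh (grid (⌊(y - x0) / Δ⌋₊ + 1) - grid (⌊(Y i - x0) / Δ⌋₊ + 1))))
          - Kh (y - Y i)) := by
      rw [hfFFT y, hfex y, hfbin' (grid ⌊(y - x0) / Δ⌋₊), hfbin' (grid (⌊(y - x0) / Δ⌋₊ + 1))]
      rw [Finset.mul_sum, Finset.mul_sum, ← Finset.sum_add_distrib, ← Finset.sum_sub_distrib]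
      refine Finset.sum_congr rfl fun i _ => by ring
    rw [hdiffsum]
    calc |∑ i, ω i * _| ≤ ∑ i, |ω i * _| := Finset.abs_sum_le_sum_abs _ _
      _ ≤ ∑ i, ω i * (C2 / h ^ 3 / 4 * Δ ^ 2) := by
          refine Finset.sum_le_sum fun i _ => ?_
          rw [abs_mul, abs_of_nonneg (hω i)]
          refine mul_le_mul_of_nonneg_left ?_ (hω i)
          exact keybound (grid ⌊(y - x0) / Δ⌋₊) (grid (⌊(y - x0) / Δ⌋₊ + 1))
            (grid ⌊(Y i - x0) / Δ⌋₊) (grid (⌊(Y i - x0) / Δ⌋₊ + 1))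
            ((y - x0) / Δ - (⌊(y - x0) / Δ⌋₊ : ℝ))
            ((Y i - x0) / Δ - (⌊(Y i - x0) / Δ⌋₊ : ℝ))
            ht0 ht1 (hfacts i).1 (hfacts i).2.1 (hstep _) (hstep _) y (Y i) hyrep (hYrep i)
      _ = C2 / h ^ 3 / 4 * Δ ^ 2 := by rw [← Finset.sum_mul, hωsum, one_mul]
      _ = 1 / 4 * C2 * Δ ^ 2 / h ^ 3 := by ring
  exact ⟨fun i => main (Y i) (hY i).1, fun y hy => main y hy.1⟩
end

section
/- Let 𝕂 : ℝ → ℝ be twice continuously differentiable and bounded with ‖𝕂''‖∞ < ∞. Then the binned KDE obtained by linear binning satisfies the uniform bound sup_{y∈ℝ} |f̃^bin(y) − f̃^exact(y)| ≤ (1/8)·‖𝕂''‖∞·Δ²/h³. -/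
section Helpers
open intervalIntegral

lemma taylor2_nonneg (f : ℝ → ℝ) (hf : ContDiff ℝ 2 f) (B : ℝ)
    (hB : ∀ u, |deriv (deriv f) u| ≤ B) (a t : ℝ) (ht : 0 ≤ t) :
    |f (a + t) - f a - deriv f a * t| ≤ B * t ^ 2 / 2 := by
  have hK2 : ContDiff ℝ (1 + 1) f := by norm_num; exact hf
  obtain ⟨hdiff, -, hder1⟩ := contDiff_succ_iff_deriv.mp hK2
  have hderd : Differentiable ℝ (deriv f) := hder1.differentiable one_ne_zero
  -- Lipschitz bound on deriv f
  have hlip : ∀ u v : ℝ, |deriv f u - deriv f v| ≤ B * |u - v| := by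
    intro u v
    have := convex_univ.norm_image_sub_le_of_norm_deriv_le (f := deriv f) (s := Set.univ)
      (fun x _ => hderd x) (fun x _ => hB x) (Set.mem_univ v) (Set.mem_univ u)
    simpa using this
  have hcont : Continuous (deriv f) := hder1.continuous
  -- FTC
  have hFTC : ∫ s in a..(a+t), deriv f s = f (a+t) - f a := by
    apply integral_deriv_eq_sub (fun x _ => hdiff x)
    exact (hcont.intervalIntegrable _ _)
  have hI1 : IntervalIntegrable (fun s => deriv f s - deriv f a) MeasureTheory.volume a (a+t) :=
    ((hcont.sub continuous_const).intervalIntegrable _ _)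
  have key : f (a + t) - f a - deriv f a * t = ∫ s in a..(a+t), (deriv f s - deriv f a) := by
    rw [intervalIntegral.integral_sub ((hcont.intervalIntegrable _ _)) (intervalIntegrable_const)]
    rw [hFTC, intervalIntegral.integral_const]
    simp [smul_eq_mul]; ring
  rw [key]
  have hb : ∀ s ∈ Set.uIcc a (a+t), |deriv f s - deriv f a| ≤ B * (s - a) := by
    intro s hs
    rw [Set.uIcc_of_le (by linarith)] at hs
    calc |deriv f s - deriv f a| ≤ B * |s - a| := hlip s a
    _ = B * (s - a) := by rw [abs_of_nonneg (by linarith [hs.1])]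
  calc |∫ s in a..(a+t), (deriv f s - deriv f a)|
      ≤ ∫ s in a..(a+t), B * (s - a) := by
        apply intervalIntegral.abs_integral_le_integral_abs (by linarith) |>.trans
        apply intervalIntegral.integral_mono_on (by linarith)
        · exact hI1.abs
        · exact (((continuous_const.mul (continuous_id.sub continuous_const))).intervalIntegrable _ _)
        · intro s hs
          exact hb s (by rw [Set.uIcc_of_le (by linarith)]; exact hs)
    _ = B * t ^ 2 / 2 := by
        rw [intervalIntegral.integral_const_mul]
        have : ∫ s in a..(a+t), (s - a) = t^2/2 := by
          rw [intervalIntegral.integral_sub (intervalIntegrable_id) intervalIntegrable_const,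
            integral_id, intervalIntegral.integral_const]
          simp [smul_eq_mul]; ring
        rw [this]; ring

lemma taylor2 (f : ℝ → ℝ) (hf : ContDiff ℝ 2 f) (B : ℝ)
    (hB : ∀ u, |deriv (deriv f) u| ≤ B) (a t : ℝ) :
    |f (a + t) - f a - deriv f a * t| ≤ B * t ^ 2 / 2 := by
  rcases le_total 0 t with ht | ht
  · exact taylor2_nonneg f hf B hB a t ht
  · -- reflect: g s = f (-s)
    set g : ℝ → ℝ := fun s => f (-s) with hg
    have hK2 : ContDiff ℝ (1 + 1) f := by norm_num; exact hf
    obtain ⟨hdiff, -, hder1⟩ := contDiff_succ_iff_deriv.mp hK2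
    have hderd : Differentiable ℝ (deriv f) := hder1.differentiable one_ne_zero
    have hgC : ContDiff ℝ 2 g := hf.comp (contDiff_neg)
    have hgd : ∀ s, deriv g s = -(deriv f (-s)) := by
      intro s
      have : HasDerivAt g (deriv f (-s) * (-1)) s :=
        ((hdiff (-s)).hasDerivAt).comp s (hasDerivAt_neg s)
      simpa using this.deriv
    have hgdd : ∀ s, deriv (deriv g) s = deriv (deriv f) (-s) := by
      intro s
      have h1 : deriv g = fun s => -(deriv f (-s)) := funext hgd
      rw [h1]
      have : HasDerivAt (fun s : ℝ => -(deriv f (-s))) (-(deriv (deriv f) (-s) * (-1))) s :=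
        (((hderd (-s)).hasDerivAt).comp s (hasDerivAt_neg s)).neg
      simpa using this.deriv
    have hBg : ∀ u, |deriv (deriv g) u| ≤ B := fun u => by rw [hgdd]; exact hB _
    have := taylor2_nonneg g hgC B hBg (-a) (-t) (by linarith)
    have e1 : g (-a + -t) = f (a + t) := by simp [hg]; ring_nf
    have e2 : g (-a) = f a := by simp [hg]
    rw [e1, e2, hgd] at this
    simp only [neg_neg] at this
    calc |f (a + t) - f a - deriv f a * t|
        = |f (a + t) - f a - -(deriv f a) * -t| := by ring_nf
      _ ≤ B * (-t) ^ 2 / 2 := this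
      _ = B * t ^ 2 / 2 := by ring

lemma threept (f : ℝ → ℝ) (hf : ContDiff ℝ 2 f) (B : ℝ)
    (hB : ∀ u, |deriv (deriv f) u| ≤ B) (a δ β : ℝ) (hβ0 : 0 ≤ β) (hβ1 : β ≤ 1) :
    |(1 - β) * f a + β * f (a + δ) - f (a + β * δ)| ≤ B * δ ^ 2 / 8 := by
  have hB0 : 0 ≤ B := le_trans (abs_nonneg _) (hB 0)
  set c := a + β * δ with hc
  have e1 := taylor2 f hf B hB c (-(β * δ))
  have e2 := taylor2 f hf B hB c ((1 - β) * δ)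
  have hca : c + -(β * δ) = a := by ring
  have hcb : c + (1 - β) * δ = a + δ := by ring
  rw [hca] at e1; rw [hcb] at e2
  rw [abs_le] at e1 e2 ⊢
  constructor <;> nlinarith [sq_nonneg (β - 1/2), sq_nonneg δ, mul_nonneg hB0 (sq_nonneg δ),
    mul_nonneg (mul_nonneg hB0 (sq_nonneg δ)) (mul_nonneg hβ0 (by linarith : (0:ℝ) ≤ 1 - β)),
    e1.1, e1.2, e2.1, e2.2]

end Helpers


open Finset

/-- Linear-binning error bound: the binned KDE differs from the exact weighted KDE by at
most `(1/8)·‖𝕂''‖∞·Δ²/h³`, uniformly over `y ∈ ℝ`. -/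
theorem stmt_1
    (n : ℕ) (Y : Fin n → ℝ) (ω : Fin n → ℝ)
    (hω : ∀ i, 0 ≤ ω i) (hωsum : ∑ i, ω i = 1)
    (h : ℝ) (hh : 0 < h)
    (K : ℝ → ℝ) (hK : ContDiff ℝ 2 K)
    (Kbd : ℝ) (hKbd : ∀ u, |K u| ≤ Kbd)
    (C2 : ℝ) (hC2 : ∀ u, |deriv (deriv K) u| ≤ C2)
    (M : ℕ) (hM : 2 ≤ M)
    (x0 Δ : ℝ) (hΔ : 0 < Δ)
    (hY : ∀ i, Y i ∈ Set.Ico x0 (x0 + ((M : ℝ) - 1) * Δ))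
    (Kh : ℝ → ℝ) (hKh : ∀ u, Kh u = h⁻¹ * K (u / h))
    (fexact : ℝ → ℝ) (hfex : ∀ y, fexact y = ∑ i, ω i * Kh (y - Y i))
    (grid : ℕ → ℝ) (hgrid : ∀ m, grid m = x0 + m * Δ)
    (c : ℕ → ℝ)
    (hc : ∀ m, c m = ∑ i, ω i *
      ((if m = ⌊(Y i - x0) / Δ⌋₊ then 1 - ((Y i - x0) / Δ - ⌊(Y i - x0) / Δ⌋₊) else 0)
        + (if m = ⌊(Y i - x0) / Δ⌋₊ + 1 then (Y i - x0) / Δ - ⌊(Y i - x0) / Δ⌋₊ else 0)))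
    (fbin : ℝ → ℝ) (hfbin : ∀ y, fbin y = ∑ m ∈ range M, c m * Kh (y - grid m)) :
    ∀ y : ℝ, |fbin y - fexact y| ≤ 1 / 8 * C2 * Δ ^ 2 / h ^ 3 := by
  intro y
  have hhne : h ≠ 0 := ne_of_gt hh
  have hΔne : Δ ≠ 0 := ne_of_gt hΔ
  set J : Fin n → ℕ := fun i => ⌊(Y i - x0) / Δ⌋₊ with hJ
  set A : Fin n → ℝ := fun i => (Y i - x0) / Δ - J i with hA
  have hx : ∀ i, 0 ≤ (Y i - x0) / Δ := fun i =>
    div_nonneg (sub_nonneg.mpr (hY i).1) hΔ.le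
  have hA0 : ∀ i, 0 ≤ A i := fun i => sub_nonneg.mpr (Nat.floor_le (hx i))
  have hA1 : ∀ i, A i ≤ 1 := fun i => by
    have := (Nat.lt_floor_add_one ((Y i - x0) / Δ)).le
    simp only [hA]; push_cast; linarith
  have hJM : ∀ i, J i + 1 < M := by
    intro i
    have h2 : (Y i - x0) / Δ < ((M - 1 : ℕ) : ℝ) := by
      rw [div_lt_iff₀ hΔ]
      have := (hY i).2
      push_cast [Nat.cast_sub (by omega : 1 ≤ M)]
      linarith
    have h3 := (Nat.floor_lt (hx i)).mpr h2
    have h4 : J i = ⌊(Y i - x0) / Δ⌋₊ := rfl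
    omega
  have hYeq : ∀ i, Y i = x0 + (J i : ℝ) * Δ + A i * Δ := by
    intro i
    have : (Y i - x0) / Δ = (J i : ℝ) + A i := by simp [hA]
    field_simp at this
    linarith
  -- rearrange fbin
  have hbin : fbin y = ∑ i, ω i * ((1 - A i) * Kh (y - grid (J i))
      + A i * Kh (y - grid (J i + 1))) := by
    rw [hfbin]
    simp_rw [hc, Finset.sum_mul]
    rw [Finset.sum_comm]
    refine Finset.sum_congr rfl fun i _ => ?_
    have : ∀ m ∈ range M, ω i *
        ((if m = J i then 1 - A i else 0) + (if m = J i + 1 then A i else 0)) * Kh (y - grid m)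
        = (if m = J i then ω i * ((1 - A i) * Kh (y - grid m)) else 0)
          + (if m = J i + 1 then ω i * (A i * Kh (y - grid m)) else 0) := by
      intro m _
      by_cases h1 : m = J i
      · by_cases h2 : m = J i + 1
        · omega
        · simp [h1, h2]; ring
      · by_cases h2 : m = J i + 1
        · simp [h1, h2]; ring
        · simp [h1, h2]
    rw [Finset.sum_congr rfl this, Finset.sum_add_distrib,
      Finset.sum_ite_eq' (range M) (J i), Finset.sum_ite_eq' (range M) (J i + 1)]
    have m1 : J i ∈ range M := mem_range.mpr (by have := hJM i; omega)
    have m2 : J i + 1 ∈ range M := mem_range.mpr (hJM i)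
    rw [if_pos m1, if_pos m2]
    ring
  rw [hbin, hfex, ← Finset.sum_sub_distrib]
  have hbound : ∀ i ∈ Finset.univ (α := Fin n),
      |ω i * ((1 - A i) * Kh (y - grid (J i)) + A i * Kh (y - grid (J i + 1)))
        - ω i * Kh (y - Y i)| ≤ ω i * (1 / 8 * C2 * Δ ^ 2 / h ^ 3) := by
    intro i _
    set a : ℝ := (y - grid (J i + 1)) / h with ha
    set δ : ℝ := Δ / h with hδ
    set β : ℝ := 1 - A i with hβ
    have key : (1 - A i) * Kh (y - grid (J i)) + A i * Kh (y - grid (J i + 1)) - Kh (y - Y i)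
        = h⁻¹ * ((1 - β) * K a + β * K (a + δ) - K (a + β * δ)) := by
      have e1 : y - grid (J i) = (a + δ) * h := by
        simp only [ha, hδ, hgrid]; push_cast; field_simp; ring
      have e2 : y - grid (J i + 1) = a * h := by
        simp only [ha]; field_simp
      have e3 : y - Y i = (a + β * δ) * h := by
        simp only [ha, hδ, hβ, hgrid, hYeq i]; push_cast; field_simp; ring
      rw [hKh, hKh, hKh, e1, e2, e3, mul_div_assoc, mul_div_assoc, mul_div_assoc,
        div_self hhne, mul_one, mul_one, mul_one]
      simp only [hβ]; ring
    have hb := threept K hK C2 hC2 a δ β (by simp [hβ]; exact hA1 i)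
      (by simp [hβ]; exact hA0 i)
    calc |ω i * ((1 - A i) * Kh (y - grid (J i)) + A i * Kh (y - grid (J i + 1)))
          - ω i * Kh (y - Y i)|
        = ω i * |(1 - A i) * Kh (y - grid (J i)) + A i * Kh (y - grid (J i + 1))
            - Kh (y - Y i)| := by
          rw [← mul_sub, abs_mul, abs_of_nonneg (hω i)]
      _ = ω i * (h⁻¹ * |(1 - β) * K a + β * K (a + δ) - K (a + β * δ)|) := by
          rw [key, abs_mul, abs_of_nonneg (inv_nonneg.mpr hh.le)]
      _ ≤ ω i * (h⁻¹ * (C2 * δ ^ 2 / 8)) := by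
          apply mul_le_mul_of_nonneg_left _ (hω i)
          exact mul_le_mul_of_nonneg_left hb (inv_nonneg.mpr hh.le)
      _ = ω i * (1 / 8 * C2 * Δ ^ 2 / h ^ 3) := by
          simp only [hδ, div_pow]; ring
  calc |∑ i, (ω i * ((1 - A i) * Kh (y - grid (J i)) + A i * Kh (y - grid (J i + 1)))
        - ω i * Kh (y - Y i))|
      ≤ ∑ i, |ω i * ((1 - A i) * Kh (y - grid (J i)) + A i * Kh (y - grid (J i + 1)))
        - ω i * Kh (y - Y i)| := Finset.abs_sum_le_sum_abs _ _
    _ ≤ ∑ i, ω i * (1 / 8 * C2 * Δ ^ 2 / h ^ 3) := Finset.sum_le_sum hbound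
    _ = 1 / 8 * C2 * Δ ^ 2 / h ^ 3 := by rw [← Finset.sum_mul, hωsum, one_mul]
end

section
/- Let f₀, f₁ : ℝ → [0,∞) be measurable Lebesgue probability densities and π₀ ∈ (0,1), π₁ = 1−π₀. Define the joint probability measure μ on Bool × ℝ by μ = π₀·(δ_{true} ⊗ f₀·λ) + π₁·(δ_{false} ⊗ f₁·λ), where λ is Lebesgue measure. Define r(y) = π₀f₀(y)/(π₀f₀(y)+π₁f₁(y)) when π₀f₀(y)+π₁f₁(y) > 0 and r(y)=0 otherwise. Then the conditional expectation under μ of the indicator of {(z,y) : z = true} given the σ-algebra generated by the second coordinate equals (z,y) ↦ r(y), μ-almost everywhere. -/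
open MeasureTheory ENNReal NNReal

/-- Integral over `snd ⁻¹' t` of a function against `dirac b ⊗ (f ∂λ)`. -/
lemma aux_prod_integral (f : ℝ → ℝ) (hf : Measurable f) (hnn : ∀ y, 0 ≤ f y)
    (b : Bool) (t : Set ℝ) (ht : MeasurableSet t) (h : Bool × ℝ → ℝ)
    (hh : StronglyMeasurable h) :
    ∫ x in Prod.snd ⁻¹' t, h x
        ∂((Measure.dirac b).prod (volume.withDensity fun y => ENNReal.ofReal (f y)))
      = ∫ y in t, f y * h (b, y) := by
  have hpre : (Prod.mk b) ⁻¹' (Prod.snd ⁻¹' t) = t := by ext y; simp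
  rw [Measure.dirac_prod, Measure.restrict_map measurable_prodMk_left (measurable_snd ht),
    integral_map measurable_prodMk_left.aemeasurable hh.aestronglyMeasurable, hpre,
    restrict_withDensity ht]
  have : (fun y => ENNReal.ofReal (f y)) = fun y => ((f y).toNNReal : ℝ≥0∞) := rfl
  rw [this, integral_withDensity_eq_integral_smul hf.real_toNNReal]
  refine integral_congr_ae (Filter.Eventually.of_forall fun y => ?_)
  simp [NNReal.smul_def, Real.coe_toNNReal _ (hnn y)]

/-- E-step posterior responsibilities: for the two-component mixture with latent label
`Z ~ Bernoulli(π₀)` and conditional densities `f₀`, `f₁`, the conditional expectation of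
`1{Z = true}` given the second coordinate is `π₀f₀(Y)/(π₀f₀(Y)+π₁f₁(Y))`. -/
theorem stmt_6 (f₀ f₁ : ℝ → ℝ) (hf₀m : Measurable f₀) (hf₁m : Measurable f₁)
    (hf₀nn : ∀ y, 0 ≤ f₀ y) (hf₁nn : ∀ y, 0 ≤ f₁ y)
    (hf₀int : Integrable f₀) (hf₁int : Integrable f₁)
    (hf₀dens : ∫ y, f₀ y = 1) (hf₁dens : ∫ y, f₁ y = 1)
    (π₀ : ℝ) (hπ₀ : π₀ ∈ Set.Ioo (0:ℝ) 1) (π₁ : ℝ) (hπ₁ : π₁ = 1 - π₀)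
    (μ : Measure (Bool × ℝ))
    (hμ : μ = ENNReal.ofReal π₀ •
        (Measure.dirac true).prod (volume.withDensity fun y => ENNReal.ofReal (f₀ y))
      + ENNReal.ofReal π₁ •
        (Measure.dirac false).prod (volume.withDensity fun y => ENNReal.ofReal (f₁ y)))
    (r : ℝ → ℝ)
    (hr : ∀ y, r y = if 0 < π₀ * f₀ y + π₁ * f₁ y
      then π₀ * f₀ y / (π₀ * f₀ y + π₁ * f₁ y) else 0) :
    μ[Set.indicator {p : Bool × ℝ | p.1 = true} (fun _ => (1:ℝ)) |
        MeasurableSpace.comap Prod.snd inferInstance]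
      =ᵐ[μ] fun p => r p.2 := by
  obtain ⟨hπ₀pos, hπ₀lt⟩ := hπ₀
  have hπ₁pos : 0 < π₁ := by rw [hπ₁]; linarith
  -- probability measures
  have hprob : ∀ (f : ℝ → ℝ), Measurable f → (∀ y, 0 ≤ f y) → Integrable f →
      (∫ y, f y) = 1 →
      IsProbabilityMeasure (volume.withDensity fun y => ENNReal.ofReal (f y)) := by
    intro f hm hnn hint hdens
    constructor
    rw [withDensity_apply _ MeasurableSet.univ, Measure.restrict_univ,
      ← ofReal_integral_eq_lintegral_ofReal hint (Filter.Eventually.of_forall hnn), hdens]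
    simp
  haveI i₀ := hprob f₀ hf₀m hf₀nn hf₀int hf₀dens
  haveI i₁ := hprob f₁ hf₁m hf₁nn hf₁int hf₁dens
  set ν₀ := (Measure.dirac true).prod (volume.withDensity fun y => ENNReal.ofReal (f₀ y)) with hν₀
  set ν₁ := (Measure.dirac false).prod (volume.withDensity fun y => ENNReal.ofReal (f₁ y)) with hν₁
  haveI : IsProbabilityMeasure ν₀ := by rw [hν₀]; infer_instance
  haveI : IsProbabilityMeasure ν₁ := by rw [hν₁]; infer_instance
  haveI hfin : IsFiniteMeasure μ := by
    constructor
    rw [hμ]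
    simp only [Measure.add_apply, Measure.smul_apply, measure_univ, smul_eq_mul, mul_one]
    exact ENNReal.add_lt_top.2 ⟨ENNReal.ofReal_lt_top, ENNReal.ofReal_lt_top⟩
  have hm : MeasurableSpace.comap (Prod.snd : Bool × ℝ → ℝ) inferInstance ≤
      (inferInstance : MeasurableSpace (Bool × ℝ)) :=
    (measurable_snd (α := Bool) (β := ℝ)).comap_le
  haveI : SigmaFinite (μ.trim hm) := by infer_instance
  -- measurability of r and bounds
  have hrm : Measurable r := by
    have : r = fun y => if 0 < π₀ * f₀ y + π₁ * f₁ y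
        then π₀ * f₀ y / (π₀ * f₀ y + π₁ * f₁ y) else 0 := funext hr
    rw [this]
    exact Measurable.ite
      (measurableSet_lt measurable_const (by fun_prop))
      ((measurable_const.mul hf₀m).div (by fun_prop)) measurable_const
  have hr01 : ∀ y, 0 ≤ r y ∧ r y ≤ 1 := by
    intro y
    rw [hr y]
    split_ifs with h
    · constructor
      · exact div_nonneg (mul_nonneg hπ₀pos.le (hf₀nn y)) h.le
      · apply div_le_one_of_le₀ _ h.le
        nlinarith [hf₁nn y]
    · simp
  -- key pointwise identity
  have hkey : ∀ y, π₀ * (f₀ y * r y) + π₁ * (f₁ y * r y) = π₀ * f₀ y := by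
    intro y
    rw [hr y]
    split_ifs with h
    · have hne : π₀ * f₀ y + π₁ * f₁ y ≠ 0 := ne_of_gt h
      field_simp
    · have h0 : π₀ * f₀ y = 0 := by nlinarith [hf₀nn y, hf₁nn y]
      have : f₀ y = 0 := by
        rcases mul_eq_zero.1 h0 with h' | h'
        · exact absurd h' (ne_of_gt hπ₀pos)
        · exact h'
      simp [this]
  have hset : MeasurableSet {p : Bool × ℝ | p.1 = true} := by
    have : {p : Bool × ℝ | p.1 = true} = Prod.fst ⁻¹' {true} := by ext p; simp
    rw [this]; exact measurable_fst (measurableSet_singleton true)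
  have hindsm : StronglyMeasurable
      (Set.indicator {p : Bool × ℝ | p.1 = true} (fun _ => (1:ℝ))) :=
    (stronglyMeasurable_const.indicator hset)
  have hgsm : StronglyMeasurable (fun p : Bool × ℝ => r p.2) :=
    (hrm.comp measurable_snd).stronglyMeasurable
  have hgint : Integrable (fun p : Bool × ℝ => r p.2) μ :=
    (integrable_const (1:ℝ)).mono' hgsm.aestronglyMeasurable
      (Filter.Eventually.of_forall fun p => by
        rw [Real.norm_eq_abs, abs_of_nonneg (hr01 p.2).1]; exact (hr01 p.2).2)
  have hfint : Integrable (Set.indicator {p : Bool × ℝ | p.1 = true} (fun _ => (1:ℝ))) μ :=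
    (integrable_const (1:ℝ)).indicator hset
  symm
  refine ae_eq_condExp_of_forall_setIntegral_eq hm hfint
    (fun s _ _ => hgint.integrableOn) ?_
    (StronglyMeasurable.aestronglyMeasurable
      ((hrm.comp (comap_measurable Prod.snd)).stronglyMeasurable))
  rintro s ⟨t, ht, rfl⟩ -
  -- component integrability
  have hcomp : ∀ (h : Bool × ℝ → ℝ), StronglyMeasurable h → (∀ x, ‖h x‖ ≤ 1) →
      ∀ (ν : Measure (Bool × ℝ)) (c : ℝ≥0∞), IsProbabilityMeasure ν → c ≠ ⊤ →
      Integrable h ((c • ν).restrict (Prod.snd ⁻¹' t)) := by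
    intro h hsm hbd ν c hp hc
    haveI : IsFiniteMeasure (c • ν) := by
      constructor
      rw [Measure.smul_apply, measure_univ, smul_eq_mul, mul_one]
      exact hc.lt_top
    exact ((integrable_const (1:ℝ)).mono' hsm.aestronglyMeasurable
      (Filter.Eventually.of_forall hbd)).restrict
  have hbd_ind : ∀ x, ‖Set.indicator {p : Bool × ℝ | p.1 = true} (fun _ => (1:ℝ)) x‖ ≤ 1 := by
    intro x
    rw [Set.indicator]
    split_ifs <;> simp
  have hbd_g : ∀ x : Bool × ℝ, ‖r x.2‖ ≤ 1 := fun x => by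
    rw [Real.norm_eq_abs, abs_of_nonneg (hr01 x.2).1]; exact (hr01 x.2).2
  have hLHS : ∀ (h : Bool × ℝ → ℝ), StronglyMeasurable h → (∀ x, ‖h x‖ ≤ 1) →
      ∫ x in Prod.snd ⁻¹' t, h x ∂μ
        = π₀ * (∫ y in t, f₀ y * h (true, y)) + π₁ * (∫ y in t, f₁ y * h (false, y)) := by
    intro h hsm hbd
    rw [hμ, Measure.restrict_add, Measure.restrict_smul, Measure.restrict_smul,
      integral_add_measure]
    · rw [integral_smul_measure, integral_smul_measure,
        aux_prod_integral f₀ hf₀m hf₀nn true t ht h hsm,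
        aux_prod_integral f₁ hf₁m hf₁nn false t ht h hsm,
        ENNReal.toReal_ofReal hπ₀pos.le, ENNReal.toReal_ofReal hπ₁pos.le]
      simp [smul_eq_mul]
    · rw [← Measure.restrict_smul]
      exact hcomp h hsm hbd ν₀ _ ‹_› ENNReal.ofReal_ne_top
    · rw [← Measure.restrict_smul]
      exact hcomp h hsm hbd ν₁ _ ‹_› ENNReal.ofReal_ne_top
  rw [hLHS _ hgsm hbd_g, hLHS _ hindsm hbd_ind]
  have e1 : ∀ y : ℝ, f₀ y * Set.indicator {p : Bool × ℝ | p.1 = true}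
      (fun _ => (1:ℝ)) (true, y) = f₀ y := by
    intro y; rw [Set.indicator_of_mem (by simp)]; ring
  have e0 : ∀ y : ℝ, f₁ y * Set.indicator {p : Bool × ℝ | p.1 = true}
      (fun _ => (1:ℝ)) (false, y) = 0 := by
    intro y; rw [Set.indicator_of_notMem (by simp)]; ring
  simp only [e1, e0, integral_zero, mul_zero, add_zero]
  -- now: π₀ * ∫ f₀ r + π₁ * ∫ f₁ r = π₀ * ∫ f₀
  have hint₀ : Integrable (fun y => f₀ y * r y) (volume.restrict t) := by
    have := (hf₀int.restrict (s := t)).bdd_mul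
      (hrm.stronglyMeasurable.aestronglyMeasurable) (c := 1) (Filter.Eventually.of_forall fun y => by
        rw [Real.norm_eq_abs, abs_of_nonneg (hr01 y).1]; exact (hr01 y).2)
    simpa [mul_comm] using this
  have hint₁ : Integrable (fun y => f₁ y * r y) (volume.restrict t) := by
    have := (hf₁int.restrict (s := t)).bdd_mul
      (hrm.stronglyMeasurable.aestronglyMeasurable) (c := 1) (Filter.Eventually.of_forall fun y => by
        rw [Real.norm_eq_abs, abs_of_nonneg (hr01 y).1]; exact (hr01 y).2)
    simpa [mul_comm] using this
  rw [← integral_const_mul, ← integral_const_mul, ← integral_add (hint₀.const_mul π₀)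
    (hint₁.const_mul π₁), ← integral_const_mul]
  exact integral_congr_ae (Filter.Eventually.of_forall fun y => hkey y)
end

section
/- Under Assumptions (a)–(f) below, any sequence of measurable maximizers η̂ₙ = (θ̂ₙ, α̂ₙ) ∈ argmax_{η∈𝒞×Π} L̃ₙ^{(ℓ)}(η) of the stage-ℓ weighted FFT plug-in criterion L̃ₙ^{(ℓ)}(η) = Σ_{i=1}^n ŵ_i·log{α f₀(Y_i;θ) + (1−α)·f̃ₙ^FFT(Y_i)} converges in probability to η* = (θ*_ℓ, α*), the unique maximizer of the oracle criterion L^{(ℓ)}(η) = E_{f^{(ℓ)}}[log{α f₀(Y;θ) + (1−α) f_bg^{(ℓ)}(Y)}]. -/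
open MeasureTheory ProbabilityTheory Filter
open scoped ENNReal NNReal

set_option maxHeartbeats 3200000

private lemma abs_sub_le'' (a b : ℝ) : |a - b| ≤ |a| + |b| := by
  rw [sub_eq_add_neg]
  exact le_of_le_of_eq (abs_add_le a (-b)) (by rw [abs_neg])

private lemma logdiff {x y m : ℝ} (hm : 0 < m) (hx : m ≤ x) (hy : m ≤ y) :
    |Real.log x - Real.log y| ≤ |x - y| / m := by
  have key : ∀ a b : ℝ, m ≤ a → m ≤ b → Real.log a - Real.log b ≤ |a - b| / m := by
    intro a b ha hb
    rcases le_or_gt a b with hab | hab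
    · have h1 : Real.log a ≤ Real.log b := Real.log_le_log (lt_of_lt_of_le hm ha) hab
      have h2 : (0:ℝ) ≤ |a - b| / m := by positivity
      linarith
    · have hbpos : 0 < b := lt_of_lt_of_le hm hb
      have hapos : 0 < a := lt_of_lt_of_le hm ha
      have h1 : Real.log a - Real.log b = Real.log (a / b) :=
        (Real.log_div (ne_of_gt hapos) (ne_of_gt hbpos)).symm
      have h2 : Real.log (a / b) ≤ a / b - 1 := Real.log_le_sub_one_of_pos (by positivity)
      have h3 : a / b - 1 = (a - b) / b := by field_simp
      have h4 : (a - b) / b ≤ (a - b) / m :=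
        div_le_div_of_nonneg_left (by linarith) hm hb
      have h5 : (a - b) / m ≤ |a - b| / m := by
        gcongr
        exact le_abs_self _
      linarith
  rw [abs_sub_le_iff]
  constructor
  · exact key x y hx hy
  · have := key y x hy hx
    rwa [abs_sub_comm] at this

/-- Theorem 4 of the paper (stage-ℓ consistency of the sequential FFT plug-in scheme): under
Assumptions (a)–(f), any sequence of measurable maximizers `η̂ₙ = (θ̂ₙ, α̂ₙ)` of the stage-ℓ
weighted FFT plug-in criterion converges in probability to the unique maximizer
`η* = (θ*_ℓ, α*)` of the oracle stage-ℓ criterion. -/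
theorem stmt_19 {Ω : Type*} [MeasurableSpace Ω] (P : Measure Ω) [IsProbabilityMeasure P]
    (Y : ℕ → Ω → ℝ) (hYmeas : ∀ i, Measurable (Y i))
    (𝒞 : Set ℝ) (h𝒞 : IsCompact 𝒞) (θstar : ℝ) (hθstar : θstar ∈ 𝒞)
    (αbar αstar : ℝ) (hαbar : 0 < αbar) (hαlt : αbar < αstar) (hαlt' : αstar < 1 - αbar)
    -- Assumption (a): stage-ℓ model
    (f₀ : ℝ → ℝ → ℝ) (fbg : ℝ → ℝ)
    (hf₀nn : ∀ y θ, 0 ≤ f₀ y θ) (hfbgnn : ∀ y, 0 ≤ fbg y)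
    (hf₀meas : ∀ θ, Measurable fun y => f₀ y θ) (hfbgmeas : Measurable fbg)
    (hf₀dens : ∀ θ ∈ 𝒞, ∫ y, f₀ y θ = 1) (hfbgdens : ∫ y, fbg y = 1)
    (fℓ : ℝ → ℝ) (hfℓdef : ∀ y, fℓ y = αstar * f₀ y θstar + (1 - αstar) * fbg y)
    (hfℓpos : ∀ y, 0 < fℓ y)
    (hf₀cont : Continuous fun p : ℝ × ℝ => f₀ p.1 p.2)
    (c : ℝ → ℝ) (hcpos : ∀ M, 0 < c M)
    (hclow : ∀ (M y θ : ℝ), |y| ≤ M → θ ∈ 𝒞 → c M ≤ f₀ y θ)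
    (B : ℝ) (hf₀B : ∀ y θ, f₀ y θ ≤ B) (hfbgB : ∀ y, fbg y ≤ B)
    (Lor : ℝ → ℝ → ℝ)
    (hLordef : ∀ θ α, Lor θ α = ∫ y, Real.log (α * f₀ y θ + (1 - α) * fbg y) * fℓ y)
    (hLorcont : ContinuousOn (fun p : ℝ × ℝ => Lor p.1 p.2)
      (𝒞 ×ˢ Set.Icc αbar (1 - αbar)))
    (hLormax : ∀ θ ∈ 𝒞, ∀ α ∈ Set.Icc αbar (1 - αbar),
      (θ, α) ≠ (θstar, αstar) → Lor θ α < Lor θstar αstar)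
    (Henv : ℝ → ℝ) (hHenvnn : ∀ y, 0 ≤ Henv y)
    (hHenvInt : Integrable (fun y => Henv y * fℓ y))
    (hHenv : ∀ y, ∀ θ ∈ 𝒞, ∀ α ∈ Set.Icc αbar (1 - αbar),
      |Real.log (α * f₀ y θ + (1 - α) * fbg y)| ≤ Henv y)
    -- Assumption (b): kernel, bandwidths, weighted KDE and its FFT approximation
    (K : ℝ → ℝ) (hKeven : ∀ u, K (-u) = K u)
    (Kbd : ℝ) (hKbd : ∀ u, |K u| ≤ Kbd)
    (lip : NNReal) (hKlip : LipschitzWith lip K)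
    (hKC2 : ContDiff ℝ 2 K)
    (hKint : ∫ u, K u = 1) (hKmom1 : ∫ u, u * K u = 0)
    (hKmom2 : Integrable fun u => u ^ 2 * |K u|)
    (h : ℕ → ℝ) (hhpos : ∀ n, 0 < h n) (hhanti : Antitone h)
    (hh0 : Tendsto h atTop (nhds 0))
    (hnh : Tendsto (fun n : ℕ => n * h n / Real.log (1 / h n)) atTop atTop)
    (w : ℕ → ℕ → Ω → ℝ) (hwnn : ∀ n i ω, 0 ≤ w n i ω)
    (fexact : ℕ → Ω → ℝ → ℝ)
    (hfexact : ∀ n ω y, fexact n ω y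
      = ∑ i ∈ Finset.range n, w n i ω * ((h n)⁻¹ * K ((y - Y i ω) / h n)))
    (Δ : ℕ → ℝ) (hΔpos : ∀ n, 0 < Δ n) (hΔ0 : Tendsto Δ atTop (nhds 0))
    (ε : ℕ → ℝ) (hε0 : Tendsto ε atTop (nhds 0))
    (fFFT : ℕ → Ω → ℝ → ℝ)
    (hFFTapprox : ∀ n ω y, |fFFT n ω y - fexact n ω y| ≤ ε n)
    -- Assumption (c): windowed sup-norm rate
    (M : ℕ → ℝ) (hM : Tendsto M atTop atTop)
    (a : ℕ → ℝ)
    (hadef : ∀ n : ℕ, a n = (h n) ^ 2 + Real.sqrt (Real.log (1 / h n) / (n * h n)))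
    (hOp : ∀ δ > 0, ∃ Mb : ℝ, limsup (fun n =>
        P {ω | ∃ y, |y| ≤ M n ∧ Mb * a n < |fexact n ω y - fbg y|}) atTop
      < ENNReal.ofReal δ)
    (r : ℕ → ℝ) (hrdef : ∀ n, r n = a n + ε n)
    -- Assumption (d)
    (hrc : Tendsto (fun n => r n / c (M n)) atTop (nhds 0))
    (htail : Tendsto (fun n =>
        (∫ y, Set.indicator {y : ℝ | M n < |y|} (fun _ => (1:ℝ)) y * fℓ y)
          * Real.log (1 / h n)) atTop (nhds 0))
    -- Assumption (e): residual weights behave like sampling from fℓ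
    (hwLLN : ∀ Φ : ℝ → ℝ, Measurable Φ → Integrable (fun y => Φ y * fℓ y) →
      ∀ δ > 0, Tendsto (fun n => P {ω | δ ≤
        |∑ i ∈ Finset.range n, w n i ω * Φ (Y i ω) - ∫ y, Φ y * fℓ y|}) atTop (nhds 0))
    (C : ℝ) (hwbd : ∃ N, ∀ n ≥ N, ∀ i ∈ Finset.range n, ∀ ω, w n i ω ≤ C / n)
    -- Assumption (f): plug-in envelope
    (Hplug : ℝ → ℝ) (hHplugnn : ∀ y, 0 ≤ Hplug y)
    (hHplugInt : Integrable (fun y => Hplug y * fℓ y))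
    (hHplug : ∃ N, ∀ n ≥ N, ∀ᵐ ω ∂P, ∀ i ∈ Finset.range n, ∀ θ ∈ 𝒞,
      ∀ α ∈ Set.Icc αbar (1 - αbar),
      |Real.log (α * f₀ (Y i ω) θ + (1 - α) * fFFT n ω (Y i ω))| ≤ Hplug (Y i ω))
    (hHplugTail : Tendsto (fun n =>
      ∫ y, Set.indicator {y : ℝ | M n < |y|} Hplug y * fℓ y) atTop (nhds 0))
    -- stage-ℓ plug-in criterion and its maximizers
    (Ltil : ℕ → Ω → ℝ → ℝ → ℝ)
    (hLtil : ∀ n ω θ α, Ltil n ω θ α = ∑ i ∈ Finset.range n,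
      w n i ω * Real.log (α * f₀ (Y i ω) θ + (1 - α) * fFFT n ω (Y i ω)))
    (θhat αhat : ℕ → Ω → ℝ)
    (hθmeas : ∀ n, Measurable (θhat n)) (hαmeas : ∀ n, Measurable (αhat n))
    (hmem : ∀ n ω, θhat n ω ∈ 𝒞 ∧ αhat n ω ∈ Set.Icc αbar (1 - αbar))
    (hargmax : ∀ n ω, ∀ θ ∈ 𝒞, ∀ α ∈ Set.Icc αbar (1 - αbar),
      Ltil n ω θ α ≤ Ltil n ω (θhat n ω) (αhat n ω)) :
    ∀ δ > 0, Tendsto (fun n =>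
      P {ω | δ ≤ |θhat n ω - θstar| ∨ δ ≤ |αhat n ω - αstar|}) atTop (nhds 0) := by
  classical
  intro δ hδ
  obtain ⟨Nf, hHplugN⟩ := hHplug
  -- ### Part 0 : basic facts
  have hΩne : Nonempty Ω := by
    by_contra hne
    have h1 : (P Set.univ) = 1 := measure_univ
    rw [Set.univ_eq_empty_iff.mpr (not_nonempty_iff.mp hne), measure_empty] at h1
    exact zero_ne_one h1
  have hεnn : ∀ n, 0 ≤ ε n := by
    intro n
    obtain ⟨ω⟩ := hΩne
    exact le_trans (abs_nonneg _) (hFFTapprox n ω 0)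
  have hann : ∀ n, 0 ≤ a n := by
    intro n; rw [hadef n]; positivity
  have hrnn : ∀ n, 0 ≤ r n := by
    intro n; rw [hrdef n]; exact add_nonneg (hann n) (hεnn n)
  have hαstarIcc : αstar ∈ Set.Icc αbar (1 - αbar) := ⟨le_of_lt hαlt, le_of_lt hαlt'⟩
  have hαbar1 : αbar < 1 - αbar := lt_trans hαlt hαlt'
  have hBpos : 0 < B :=
    lt_of_lt_of_le (hcpos 0)
      (le_trans (hclow 0 0 θstar (by simp) hθstar) (hf₀B 0 θstar))
  -- the parameter set
  set Pset : Set (ℝ × ℝ) := 𝒞 ×ˢ Set.Icc αbar (1 - αbar) with hPsetdef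
  have hPcomp : IsCompact Pset := h𝒞.prod isCompact_Icc
  set pstar : ℝ × ℝ := (θstar, αstar) with hpstardef
  have hpstarP : pstar ∈ Pset := ⟨hθstar, hαstarIcc⟩
  -- oracle log-likelihood integrand
  set ψ : ℝ × ℝ → ℝ → ℝ := fun p y => Real.log (p.2 * f₀ y p.1 + (1 - p.2) * fbg y)
    with hψdef
  have hrange : ∀ p ∈ Pset, 0 < p.2 ∧ p.2 ≤ 1 ∧ 0 ≤ 1 - p.2 ∧ αbar ≤ p.2 := by
    intro p hp
    have h1 : αbar ≤ p.2 := hp.2.1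
    have h2 : p.2 ≤ 1 - αbar := hp.2.2
    exact ⟨lt_of_lt_of_le hαbar h1, by linarith only [h1, h2, hαbar],
      by linarith only [h1, h2, hαbar], h1⟩
  have harglow : ∀ p ∈ Pset, ∀ y m₁, |y| ≤ m₁ →
      αbar * c m₁ ≤ p.2 * f₀ y p.1 + (1 - p.2) * fbg y := by
    intro p hp y m₁ hy
    obtain ⟨hp1, hp2, hp3, hp4⟩ := hrange p hp
    have h1 : c m₁ ≤ f₀ y p.1 := hclow m₁ y p.1 hy hp.1
    have h2 : αbar * c m₁ ≤ p.2 * f₀ y p.1 :=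
      mul_le_mul hp4 h1 (le_of_lt (hcpos _)) (le_trans (le_of_lt hαbar) hp4)
    have h3 : 0 ≤ (1 - p.2) * fbg y := mul_nonneg hp3 (hfbgnn y)
    linarith only [h2, h3]
  have hargpos : ∀ p ∈ Pset, ∀ y, 0 < p.2 * f₀ y p.1 + (1 - p.2) * fbg y := by
    intro p hp y
    exact lt_of_lt_of_le (mul_pos hαbar (hcpos _)) (harglow p hp y |y| le_rfl)
  have hψHenv : ∀ p ∈ Pset, ∀ y, |ψ p y| ≤ Henv y := by
    intro p hp y
    simp only [hψdef]
    exact hHenv y p.1 hp.1 p.2 hp.2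
  have hψmeas : ∀ p : ℝ × ℝ, Measurable (ψ p) := by
    intro p
    exact Real.measurable_log.comp (((hf₀meas p.1).const_mul _).add (hfbgmeas.const_mul _))
  have hψcont : ∀ y, ∀ p ∈ Pset, ContinuousAt (fun q : ℝ × ℝ => ψ q y) p := by
    intro y p hp
    have hargc : Continuous (fun q : ℝ × ℝ => q.2 * f₀ y q.1 + (1 - q.2) * fbg y) := by
      have hc1 : Continuous (fun q : ℝ × ℝ => f₀ y q.1) :=
        hf₀cont.comp (continuous_const.prodMk continuous_fst)
      exact (continuous_snd.mul hc1).add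
        ((continuous_const.sub continuous_snd).mul continuous_const)
    have h3 : ContinuousAt (fun q : ℝ × ℝ => Real.log (q.2 * f₀ y q.1 + (1 - q.2) * fbg y)) p :=
      ContinuousAt.comp (x := p)
        (f := fun q : ℝ × ℝ => q.2 * f₀ y q.1 + (1 - q.2) * fbg y)
        (g := Real.log)
        (Real.continuousAt_log (ne_of_gt (hargpos p hp y))) hargc.continuousAt
    simp only [hψdef]
    exact h3
  -- fℓ : measurability and integrability
  have hfℓmeas : Measurable fℓ := by
    have hfe : fℓ = fun y => αstar * f₀ y θstar + (1 - αstar) * fbg y := funext hfℓdef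
    rw [hfe]
    exact ((hf₀meas θstar).const_mul _).add (hfbgmeas.const_mul _)
  have hf₀int : Integrable (fun y => f₀ y θstar) := by
    by_contra hni
    have h1 := hf₀dens θstar hθstar
    rw [integral_undef hni] at h1
    norm_num at h1
  have hfbgint : Integrable fbg := by
    by_contra hni
    rw [integral_undef hni] at hfbgdens
    norm_num at hfbgdens
  have hfℓint : Integrable fℓ := by
    apply Integrable.congr ((hf₀int.const_mul αstar).add (hfbgint.const_mul (1 - αstar)))
    filter_upwards with y
    exact (hfℓdef y).symm
  have hfℓ1 : ∫ y, fℓ y = 1 := by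
    have hfe : ∫ y, fℓ y = ∫ y, (αstar * f₀ y θstar + (1 - αstar) * fbg y) := by
      congr 1
      funext y
      exact hfℓdef y
    rw [hfe, integral_add (hf₀int.const_mul _) (hfbgint.const_mul _),
      integral_const_mul, integral_const_mul, hf₀dens θstar hθstar, hfbgdens]
    ring
  -- integrability against fℓ via the envelope
  have hIntDom : ∀ Φ : ℝ → ℝ, Measurable Φ → (∀ y, |Φ y| ≤ Henv y) →
      Integrable (fun y => Φ y * fℓ y) := by
    intro Φ hm hb
    refine hHenvInt.mono' ((hm.mul hfℓmeas).aestronglyMeasurable) ?_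
    filter_upwards with y
    rw [Real.norm_eq_abs, abs_mul, abs_of_nonneg (le_of_lt (hfℓpos y))]
    exact mul_le_mul_of_nonneg_right (hb y) (le_of_lt (hfℓpos y))
  -- ### Part 2 : dense sequence and the measurable envelope Ψ
  haveI : Nonempty (↥Pset) := ⟨⟨pstar, hpstarP⟩⟩
  obtain ⟨Ds, hDscount, hDsdense⟩ := TopologicalSpace.exists_countable_dense (↥Pset)
  obtain ⟨df, hdf⟩ := hDscount.exists_eq_range (hDsdense.nonempty)
  set d : ℕ → ℝ × ℝ := fun k => (df k : ℝ × ℝ) with hddef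
  have hdmem : ∀ k, d k ∈ Pset := fun k => (df k).2
  have hdapprox : ∀ p ∈ Pset, ∀ ρ' > (0:ℝ), ∃ k, dist p (d k) < ρ' := by
    intro p hp ρ' hρ'
    obtain ⟨z, hzD, hz⟩ := hDsdense.exists_dist_lt (⟨p, hp⟩ : ↥Pset) hρ'
    rw [hdf] at hzD
    obtain ⟨k, rfl⟩ := hzD
    exact ⟨k, by simpa [Subtype.dist_eq] using hz⟩
  set Ψ : ℝ → ℝ := fun y => ⨆ k : ℕ, |ψ (d k) y| with hΨdef
  have hΨbddrange : ∀ y, BddAbove (Set.range fun k : ℕ => |ψ (d k) y|) := by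
    intro y
    refine ⟨Henv y, ?_⟩
    rintro x ⟨k, rfl⟩
    exact hψHenv (d k) (hdmem k) y
  have hΨleHenv : ∀ y, Ψ y ≤ Henv y := by
    intro y
    simp only [hΨdef]
    exact ciSup_le fun k => hψHenv (d k) (hdmem k) y
  have hΨnn : ∀ y, 0 ≤ Ψ y := by
    intro y
    simp only [hΨdef]
    exact le_trans (abs_nonneg _) (le_ciSup (hΨbddrange y) 0)
  have hΨge : ∀ p ∈ Pset, ∀ y, |ψ p y| ≤ Ψ y := by
    intro p hp y
    by_contra hlt
    push_neg at hlt
    set εx := |ψ p y| - Ψ y with hεxdef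
    have hεxpos : 0 < εx := by simp only [hεxdef]; linarith only [hlt]
    obtain ⟨ρ', hρ'pos, hρ'⟩ := Metric.continuousAt_iff.mp (hψcont y p hp) εx hεxpos
    obtain ⟨k, hk⟩ := hdapprox p hp ρ' hρ'pos
    have h1 : dist (ψ (d k) y) (ψ p y) < εx := hρ' (by rwa [dist_comm])
    have h2 : |ψ (d k) y| ≤ Ψ y := by
      simp only [hΨdef]
      exact le_ciSup (hΨbddrange y) k
    rw [Real.dist_eq] at h1
    have h3 : |ψ p y| - |ψ (d k) y| ≤ |ψ (d k) y - ψ p y| := by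
      have := abs_sub_abs_le_abs_sub (ψ p y) (ψ (d k) y)
      rwa [abs_sub_comm] at this
    simp only [hεxdef] at h1
    linarith only [h1, h2, h3]
  have hΨmeas : Measurable Ψ := by
    rw [hΨdef]
    apply Measurable.iSup
    intro k
    exact (hψmeas (d k)).abs
  -- ### Part 3 : the bad set and the gap
  set Sb : Set (ℝ × ℝ) :=
    {p : ℝ × ℝ | p ∈ Pset ∧ (δ ≤ |p.1 - θstar| ∨ δ ≤ |p.2 - αstar|)} with hSbdef
  by_cases hSbne : Sb.Nonempty
  swap
  · -- empty bad set : trivial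
    have hempty : ∀ n, {ω | δ ≤ |θhat n ω - θstar| ∨ δ ≤ |αhat n ω - αstar|} = (∅ : Set Ω) := by
      intro n
      ext ω
      simp only [Set.mem_setOf_eq, Set.mem_empty_iff_false, iff_false]
      intro hbad
      exact hSbne ⟨(θhat n ω, αhat n ω), ⟨(hmem n ω).1, (hmem n ω).2⟩, hbad⟩
    have hPz : (fun n => P {ω | δ ≤ |θhat n ω - θstar| ∨ δ ≤ |αhat n ω - αstar|})
        = fun _ => (0 : ℝ≥0∞) := by
      funext n
      rw [hempty n, measure_empty]
    rw [hPz]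
    exact tendsto_const_nhds
  · -- main case
    have hSbsubP : Sb ⊆ Pset := fun p hp => hp.1
    have hSbcomp : IsCompact Sb := by
      have hclosed : IsClosed {p : ℝ × ℝ | δ ≤ |p.1 - θstar| ∨ δ ≤ |p.2 - αstar|} := by
        have h1 : IsClosed {p : ℝ × ℝ | δ ≤ |p.1 - θstar|} :=
          isClosed_le continuous_const ((continuous_fst.sub continuous_const).abs)
        have h2 : IsClosed {p : ℝ × ℝ | δ ≤ |p.2 - αstar|} :=
          isClosed_le continuous_const ((continuous_snd.sub continuous_const).abs)
        exact h1.union h2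
      exact hPcomp.inter_right hclosed
    obtain ⟨p₀, hp₀Sb, hp₀max⟩ := hSbcomp.exists_isMaxOn hSbne (hLorcont.mono hSbsubP)
    have hgap : Lor p₀.1 p₀.2 < Lor θstar αstar := by
      apply hLormax p₀.1 hp₀Sb.1.1 p₀.2 hp₀Sb.1.2
      intro hEq
      rw [Prod.mk.injEq] at hEq
      obtain ⟨h1, h2⟩ := hEq
      rcases hp₀Sb.2 with hb | hb
      · rw [h1] at hb; simp only [sub_self, abs_zero] at hb; linarith only [hb, hδ]
      · rw [h2] at hb; simp only [sub_self, abs_zero] at hb; linarith only [hb, hδ]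
    set mx : ℝ := Lor p₀.1 p₀.2 with hmxdef
    set e0 : ℝ := (Lor θstar αstar - mx) / 100 with he0def
    have hepos : 0 < e0 := by
      simp only [he0def]
      linarith only [hgap]
    have hmxval : Lor θstar αstar - mx = 100 * e0 := by
      simp only [he0def]; ring
    -- ### Part 7 : measurable version of Hplug
    have hHaesm := hHplugInt.aestronglyMeasurable
    set G : ℝ → ℝ := hHaesm.mk _ with hGdef
    have hGae : (fun y => Hplug y * fℓ y) =ᶠ[ae volume] G := hHaesm.ae_eq_mk
    set N₀ : Set ℝ := toMeasurable volume {y | Hplug y * fℓ y ≠ G y} with hN₀def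
    have hN₀meas : MeasurableSet N₀ := measurableSet_toMeasurable _ _
    have hN₀null : volume N₀ = 0 := by
      rw [hN₀def, measure_toMeasurable]
      exact hGae
    set H' : ℝ → ℝ := fun y => max (G y / fℓ y) 0 with hH'def
    have hH'meas : Measurable H' :=
      (hHaesm.stronglyMeasurable_mk.measurable.div hfℓmeas).max measurable_const
    have hH'nn : ∀ y, 0 ≤ H' y := fun y => le_max_right _ _
    have hH'eq : ∀ y ∉ N₀, H' y = Hplug y := by
      intro y hy
      have hmem' : Hplug y * fℓ y = G y := by
        by_contra hne
        exact hy (subset_toMeasurable _ _ hne)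
      have hfne : fℓ y ≠ 0 := ne_of_gt (hfℓpos y)
      simp only [hH'def, ← hmem']
      rw [mul_div_assoc, div_self hfne, mul_one]
      exact max_eq_left (hHplugnn y)
    have haeN₀ : ∀ᵐ y ∂(volume : Measure ℝ), y ∉ N₀ := by
      rw [ae_iff]
      simpa using hN₀null
    have hH'int : Integrable (fun y => H' y * fℓ y) := by
      apply hHplugInt.congr
      filter_upwards [haeN₀] with y hy
      rw [hH'eq y hy]
    -- ### Part 4 : choice of the truncation level T
    have htailgen : ∀ g : ℝ → ℝ, Measurable g → (∀ y, 0 ≤ g y) →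
        Integrable (fun y => g y * fℓ y) →
        Tendsto (fun TT : ℕ => ∫ y, (if (TT : ℝ) < |y| then g y else 0) * fℓ y)
          atTop (nhds 0) := by
      intro g hgm hgnn hgint
      have hdct : Tendsto (fun TT : ℕ => ∫ y, (if (TT : ℝ) < |y| then g y else 0) * fℓ y)
          atTop (nhds (∫ _ : ℝ, (0:ℝ))) := by
        refine tendsto_integral_of_dominated_convergence (fun y => g y * fℓ y) ?_ hgint ?_ ?_
        · intro TT
          apply Measurable.aestronglyMeasurable
          apply Measurable.mul _ hfℓmeas
          apply Measurable.ite _ hgm measurable_const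
          exact measurableSet_lt measurable_const continuous_abs.measurable
        · intro TT
          filter_upwards with y
          rw [Real.norm_eq_abs, abs_mul, abs_of_nonneg (le_of_lt (hfℓpos y))]
          have h1 : |if (TT : ℝ) < |y| then g y else 0| ≤ g y := by
            split_ifs with hc
            · rw [abs_of_nonneg (hgnn y)]
            · rw [abs_zero]; exact hgnn y
          exact mul_le_mul_of_nonneg_right h1 (le_of_lt (hfℓpos y))
        · filter_upwards with y
          apply Tendsto.congr' _ tendsto_const_nhds
          filter_upwards [eventually_ge_atTop ⌈|y|⌉₊] with TT hTT
          have hnc : ¬ ((TT:ℝ) < |y|) :=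
            not_lt.mpr (le_trans (Nat.le_ceil _) (by exact_mod_cast hTT))
          rw [if_neg hnc, zero_mul]
      simpa using hdct
    have htailΨ := htailgen Ψ hΨmeas hΨnn (hIntDom Ψ hΨmeas
      (fun y => by rw [abs_of_nonneg (hΨnn y)]; exact hΨleHenv y))
    have htailH : Tendsto (fun TT : ℕ => ∫ y, (if (TT : ℝ) < |y| then H' y else 0) * fℓ y)
        atTop (nhds 0) := htailgen H' hH'meas hH'nn hH'int
    obtain ⟨T, hTΨ, hTH⟩ :=
      ((htailΨ.eventually (gt_mem_nhds hepos)).and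
        (htailH.eventually (gt_mem_nhds hepos))).exists
    -- truncated functions
    set ΦΨ : ℝ → ℝ := fun y => if (T : ℝ) < |y| then Ψ y else 0 with hΦΨdef
    set ΦH : ℝ → ℝ := fun y => if (T : ℝ) < |y| then H' y else 0 with hΦHdef
    set Φg : (ℝ × ℝ) → ℝ → ℝ := fun p y => if (T : ℝ) < |y| then 0 else ψ p y with hΦgdef
    have hΦΨnn : ∀ y, 0 ≤ ΦΨ y := by
      intro y; simp only [hΦΨdef]; split_ifs; exacts [hΨnn y, le_rfl]
    have hΦHnn : ∀ y, 0 ≤ ΦH y := by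
      intro y; simp only [hΦHdef]; split_ifs; exacts [hH'nn y, le_rfl]
    have hΦΨmeas : Measurable ΦΨ :=
      Measurable.ite (measurableSet_lt measurable_const continuous_abs.measurable)
        hΨmeas measurable_const
    have hΦHmeas : Measurable ΦH :=
      Measurable.ite (measurableSet_lt measurable_const continuous_abs.measurable)
        hH'meas measurable_const
    have hΦgmeas : ∀ p, Measurable (Φg p) := fun p =>
      Measurable.ite (measurableSet_lt measurable_const continuous_abs.measurable)
        measurable_const (hψmeas p)
    have hΦΨHenv : ∀ y, |ΦΨ y| ≤ Henv y := by
      intro y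
      simp only [hΦΨdef]
      split_ifs
      · rw [abs_of_nonneg (hΨnn y)]; exact hΨleHenv y
      · rw [abs_zero]; exact hHenvnn y
    have hΦgHenv : ∀ p ∈ Pset, ∀ y, |Φg p y| ≤ Henv y := by
      intro p hp y
      simp only [hΦgdef]
      split_ifs
      · rw [abs_zero]; exact hHenvnn y
      · exact hψHenv p hp y
    have hΦΨint : Integrable (fun y => ΦΨ y * fℓ y) := hIntDom ΦΨ hΦΨmeas hΦΨHenv
    have hΦHint : Integrable (fun y => ΦH y * fℓ y) := by
      refine hH'int.mono' ((hΦHmeas.mul hfℓmeas).aestronglyMeasurable) ?_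
      filter_upwards with y
      rw [Real.norm_eq_abs, abs_mul, abs_of_nonneg (le_of_lt (hfℓpos y)),
        abs_of_nonneg (hΦHnn y)]
      have h1 : ΦH y ≤ H' y := by
        simp only [hΦHdef]; split_ifs; exacts [le_rfl, hH'nn y]
      exact mul_le_mul_of_nonneg_right h1 (le_of_lt (hfℓpos y))
    have hΦgint : ∀ p ∈ Pset, Integrable (fun y => Φg p y * fℓ y) :=
      fun p hp => hIntDom (Φg p) (hΦgmeas p) (hΦgHenv p hp)
    have hψint : ∀ p ∈ Pset, Integrable (fun y => ψ p y * fℓ y) :=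
      fun p hp => hIntDom (ψ p) (hψmeas p)
        (fun y => hψHenv p hp y)
    -- integral comparison : the truncated integral is close to Lor
    have hIg : ∀ p ∈ Pset,
        |(∫ y, Φg p y * fℓ y) - Lor p.1 p.2| ≤ ∫ y, ΦΨ y * fℓ y := by
      intro p hp
      have htp : Integrable (fun y => (ψ p y - Φg p y) * fℓ y) := by
        apply hIntDom (fun y => ψ p y - Φg p y)
          ((hψmeas p).sub (hΦgmeas p))
        intro y
        simp only [hΦgdef]
        split_ifs
        · rw [sub_zero]; exact hψHenv p hp y
        · rw [sub_self, abs_zero]; exact hHenvnn y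
      have hsplit : Lor p.1 p.2 = (∫ y, Φg p y * fℓ y) + ∫ y, (ψ p y - Φg p y) * fℓ y := by
        rw [hLordef p.1 p.2, ← integral_add (hΦgint p hp) htp]
        refine integral_congr_ae ?_
        filter_upwards with y
        simp only [hψdef]
        ring
      have hub : ∫ y, (ψ p y - Φg p y) * fℓ y ≤ ∫ y, ΦΨ y * fℓ y := by
        apply integral_mono htp hΦΨint
        intro y
        have hb : ψ p y - Φg p y ≤ ΦΨ y := by
          simp only [hΦgdef, hΦΨdef]
          split_ifs with hc
          · rw [sub_zero]
            exact le_trans (le_abs_self _) (hΨge p hp y)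
          · rw [sub_self]
        exact mul_le_mul_of_nonneg_right hb (le_of_lt (hfℓpos y))
      have hlb : -(∫ y, ΦΨ y * fℓ y) ≤ ∫ y, (ψ p y - Φg p y) * fℓ y := by
        rw [← integral_neg]
        apply integral_mono hΦΨint.neg htp
        intro y
        have hb : -ΦΨ y ≤ ψ p y - Φg p y := by
          simp only [hΦgdef, hΦΨdef]
          split_ifs with hc
          · rw [sub_zero]
            have := hΨge p hp y
            have h2 := neg_abs_le (ψ p y)
            linarith only [this, h2]
          · rw [sub_self, neg_zero]
        simp only [Pi.neg_apply]
        rw [← neg_mul]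
        exact mul_le_mul_of_nonneg_right hb (le_of_lt (hfℓpos y))
      rw [abs_le]
      constructor
      · have : (∫ y, Φg p y * fℓ y) - Lor p.1 p.2 = -(∫ y, (ψ p y - Φg p y) * fℓ y) := by
          rw [hsplit]; ring
        rw [this]
        linarith only [hub, hlb]
      · have : (∫ y, Φg p y * fℓ y) - Lor p.1 p.2 = -(∫ y, (ψ p y - Φg p y) * fℓ y) := by
          rw [hsplit]; ring
        rw [this]
        linarith only [hub, hlb]
    -- ### Part 5 : uniform modulus of continuity on the window
    set m₀ : ℝ := αbar * c (T : ℝ) with hm₀def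
    have hm₀pos : 0 < m₀ := mul_pos hαbar (hcpos _)
    have hunif : UniformContinuousOn (fun q : ℝ × ℝ => f₀ q.1 q.2)
        ((Set.Icc (-(T:ℝ)) (T:ℝ)) ×ˢ 𝒞) :=
      (isCompact_Icc.prod h𝒞).uniformContinuousOn_of_continuous hf₀cont.continuousOn
    rw [Metric.uniformContinuousOn_iff] at hunif
    obtain ⟨ρ₁, hρ₁pos, hρ₁⟩ := hunif (e0 * m₀ / 2) (by positivity)
    set ρ : ℝ := min ρ₁ (e0 * m₀ / (4 * B + 1)) with hρdef
    have hρpos : 0 < ρ := lt_min hρ₁pos (by positivity)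
    have hmod : ∀ p ∈ Pset, ∀ p' ∈ Pset, dist p p' < ρ → ∀ y, |y| ≤ (T:ℝ) →
        |ψ p y - ψ p' y| ≤ e0 := by
      intro p hp p' hp' hd y hy
      obtain ⟨hp1, hp2, hp3, hp4⟩ := hrange p hp
      obtain ⟨hp1', hp2', hp3', hp4'⟩ := hrange p' hp'
      have hd1 : dist p.1 p'.1 ≤ dist p p' := by
        rw [Prod.dist_eq]; exact le_max_left _ _
      have hd2 : dist p.2 p'.2 ≤ dist p p' := by
        rw [Prod.dist_eq]; exact le_max_right _ _
      have hyIcc : y ∈ Set.Icc (-(T:ℝ)) (T:ℝ) := abs_le.mp hy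
      have hf₀diff : |f₀ y p.1 - f₀ y p'.1| < e0 * m₀ / 2 := by
        have h1 := hρ₁ (y, p.1) ⟨hyIcc, hp.1⟩ (y, p'.1) ⟨hyIcc, hp'.1⟩ ?_
        · rwa [Real.dist_eq] at h1
        · have : dist ((y, p.1) : ℝ × ℝ) (y, p'.1) = dist p.1 p'.1 := by
            rw [Prod.dist_eq]
            simp only [dist_self]
            exact max_eq_right dist_nonneg
          rw [this]
          exact lt_of_le_of_lt hd1 (lt_of_lt_of_le hd (min_le_left _ _))
      have hsnd : |p.2 - p'.2| < ρ := by
        rw [← Real.dist_eq]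
        exact lt_of_le_of_lt hd2 hd
      -- bound the difference of the arguments
      have hargdiff : |(p.2 * f₀ y p.1 + (1 - p.2) * fbg y)
          - (p'.2 * f₀ y p'.1 + (1 - p'.2) * fbg y)| ≤ e0 * m₀ := by
        have hkey : (p.2 * f₀ y p.1 + (1 - p.2) * fbg y)
            - (p'.2 * f₀ y p'.1 + (1 - p'.2) * fbg y)
            = p.2 * (f₀ y p.1 - f₀ y p'.1) + (p.2 - p'.2) * f₀ y p'.1
              - (p.2 - p'.2) * fbg y := by ring
        rw [hkey]
        have e1 : |p.2 * (f₀ y p.1 - f₀ y p'.1)| ≤ |f₀ y p.1 - f₀ y p'.1| := by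
          rw [abs_mul]
          apply mul_le_of_le_one_left (abs_nonneg _)
          rw [abs_of_pos hp1]; exact hp2
        have e2 : |(p.2 - p'.2) * f₀ y p'.1| ≤ ρ * B := by
          rw [abs_mul]
          apply mul_le_mul (le_of_lt hsnd) _ (abs_nonneg _) (le_of_lt hρpos)
          rw [abs_of_nonneg (hf₀nn y p'.1)]
          exact hf₀B y p'.1
        have e3 : |(p.2 - p'.2) * fbg y| ≤ ρ * B := by
          rw [abs_mul]
          apply mul_le_mul (le_of_lt hsnd) _ (abs_nonneg _) (le_of_lt hρpos)
          rw [abs_of_nonneg (hfbgnn y)]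
          exact hfbgB y
        have htri : |p.2 * (f₀ y p.1 - f₀ y p'.1) + (p.2 - p'.2) * f₀ y p'.1
            - (p.2 - p'.2) * fbg y|
            ≤ |p.2 * (f₀ y p.1 - f₀ y p'.1)| + |(p.2 - p'.2) * f₀ y p'.1|
              + |(p.2 - p'.2) * fbg y| := by
          calc |p.2 * (f₀ y p.1 - f₀ y p'.1) + (p.2 - p'.2) * f₀ y p'.1
              - (p.2 - p'.2) * fbg y|
              ≤ |p.2 * (f₀ y p.1 - f₀ y p'.1) + (p.2 - p'.2) * f₀ y p'.1|
                + |(p.2 - p'.2) * fbg y| := abs_sub_le'' _ _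
            _ ≤ |p.2 * (f₀ y p.1 - f₀ y p'.1)| + |(p.2 - p'.2) * f₀ y p'.1|
                + |(p.2 - p'.2) * fbg y| := by
                have := abs_add_le (p.2 * (f₀ y p.1 - f₀ y p'.1)) ((p.2 - p'.2) * f₀ y p'.1)
                linarith only [this]
        have hρB : ρ * B ≤ e0 * m₀ / 4 := by
          have hρ2 : ρ ≤ e0 * m₀ / (4 * B + 1) := min_le_right _ _
          have h4B : (0:ℝ) < 4 * B + 1 := by linarith only [hBpos]
          have h5 : ρ * B ≤ (e0 * m₀ / (4 * B + 1)) * B :=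
            mul_le_mul_of_nonneg_right hρ2 (le_of_lt hBpos)
          have h6 : (e0 * m₀ / (4 * B + 1)) * B ≤ e0 * m₀ / 4 := by
            rw [div_mul_eq_mul_div, div_le_div_iff₀ h4B (by norm_num : (0:ℝ) < 4)]
            nlinarith only [mul_pos hepos hm₀pos]
          linarith only [h5, h6]
        linarith only [htri, e1, e2, e3, hρB, hf₀diff]
      -- apply the log-difference bound
      have hlow1 : m₀ ≤ p.2 * f₀ y p.1 + (1 - p.2) * fbg y := by
        rw [hm₀def]; exact harglow p hp y (T:ℝ) hy
      have hlow2 : m₀ ≤ p'.2 * f₀ y p'.1 + (1 - p'.2) * fbg y := by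
        rw [hm₀def]; exact harglow p' hp' y (T:ℝ) hy
      have hld := logdiff hm₀pos hlow1 hlow2
      simp only [hψdef]
      refine le_trans hld ?_
      rw [div_le_iff₀ hm₀pos]
      exact hargdiff
    -- ### Part 6 : finite cover of Sb
    have hcov : Sb ⊆ ⋃ p ∈ Sb, Metric.ball p ρ := by
      intro p hp
      exact Set.mem_biUnion hp (Metric.mem_ball_self hρpos)
    obtain ⟨b', hb'sub, hb'fin, hb'cov⟩ :=
      hSbcomp.elim_finite_subcover_image (fun p _ => Metric.isOpen_ball) hcov
    set t : Finset (ℝ × ℝ) := hb'fin.toFinset with htdef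
    have htmem : ∀ j ∈ t, j ∈ Sb := by
      intro j hj
      exact hb'sub (hb'fin.mem_toFinset.mp hj)
    -- ### Part 8 : Lemma A (no weighted samples on null sets far out, asymptotically)
    have hlemA : Tendsto (fun n => P {ω | 0 < ∑ i ∈ Finset.range n, w n i ω *
        (if Y i ω ∈ N₀ ∧ M n < |Y i ω| then (1:ℝ) else 0)}) atTop (nhds 0) := by
      by_contra hcon
      rw [ENNReal.tendsto_atTop_zero] at hcon
      push_neg at hcon
      obtain ⟨ε₀, hε₀pos, hfreq⟩ := hcon
      -- choice of levels
      have hchoice : ∀ n : ℕ, ∃ mm : ℕ,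
          (ε₀ < P {ω | 0 < ∑ i ∈ Finset.range n, w n i ω *
            (if Y i ω ∈ N₀ ∧ M n < |Y i ω| then (1:ℝ) else 0)} →
          ε₀ < P {ω | 1 / ((mm:ℝ) + 1) ≤ ∑ i ∈ Finset.range n, w n i ω *
            (if Y i ω ∈ N₀ ∧ M n < |Y i ω| then (1:ℝ) else 0)}) := by
        intro n
        by_cases hc : ε₀ < P {ω | 0 < ∑ i ∈ Finset.range n, w n i ω *
            (if Y i ω ∈ N₀ ∧ M n < |Y i ω| then (1:ℝ) else 0)}
        · set A : ℕ → Set Ω := fun mm => {ω | 1 / ((mm:ℝ) + 1) ≤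
            ∑ i ∈ Finset.range n, w n i ω *
              (if Y i ω ∈ N₀ ∧ M n < |Y i ω| then (1:ℝ) else 0)} with hAdef
          have hAmono : Monotone A := by
            intro m1 m2 hm12 ω hω
            simp only [hAdef, Set.mem_setOf_eq] at hω ⊢
            refine le_trans ?_ hω
            apply one_div_le_one_div_of_le (by positivity)
            have : (m1 : ℝ) ≤ m2 := by exact_mod_cast hm12
            linarith only [this]
          have hsub : {ω | 0 < ∑ i ∈ Finset.range n, w n i ω *
              (if Y i ω ∈ N₀ ∧ M n < |Y i ω| then (1:ℝ) else 0)} ⊆ ⋃ mm, A mm := by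
            intro ω hω
            simp only [Set.mem_setOf_eq] at hω
            obtain ⟨mm, hmm⟩ := exists_nat_one_div_lt hω
            exact Set.mem_iUnion.mpr ⟨mm, le_of_lt hmm⟩
          have hle : P {ω | 0 < ∑ i ∈ Finset.range n, w n i ω *
              (if Y i ω ∈ N₀ ∧ M n < |Y i ω| then (1:ℝ) else 0)} ≤ ⨆ mm, P (A mm) := by
            calc P _ ≤ P (⋃ mm, A mm) := measure_mono hsub
              _ = ⨆ mm, P (A mm) := hAmono.directed_le.measure_iUnion
          have hlt : ε₀ < ⨆ mm, P (A mm) := lt_of_lt_of_le hc hle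
          obtain ⟨mm, hmm⟩ := lt_iSup_iff.mp hlt
          exact ⟨mm, fun _ => hmm⟩
        · exact ⟨0, fun hcc => absurd hcc hc⟩
      choose mf hmf using hchoice
      -- the killer test function
      set F : ℕ → ℝ → ℝ := fun n y =>
        if y ∈ N₀ ∧ M n < |y| then ((mf n : ℝ) + 1) else 0 with hFdef
      have hFnn : ∀ n y, 0 ≤ F n y := by
        intro n y
        simp only [hFdef]
        split_ifs
        · positivity
        · exact le_rfl
      have hFbdd : ∀ y, BddAbove (Set.range fun n => F n y) := by
        intro y
        obtain ⟨Nb, hNb⟩ := eventually_atTop.mp (hM.eventually (eventually_ge_atTop |y|))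
        refine ⟨∑ k ∈ Finset.range (Nb + 1), ((mf k : ℝ) + 1), ?_⟩
        rintro x ⟨n, rfl⟩
        by_cases hn : n ≥ Nb
        · have : ¬ (M n < |y|) := not_lt.mpr (hNb n hn)
          simp only [hFdef]
          rw [if_neg (fun hcc => this hcc.2)]
          exact Finset.sum_nonneg (fun k _ => by positivity)
        · push_neg at hn
          have h1 : F n y ≤ (mf n : ℝ) + 1 := by
            simp only [hFdef]
            split_ifs
            · exact le_rfl
            · positivity
          refine le_trans h1 ?_
          apply Finset.single_le_sum (f := fun k => ((mf k : ℝ) + 1))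
            (fun k _ => by positivity)
          exact Finset.mem_range.mpr (by omega)
      set Φ : ℝ → ℝ := fun y => ⨆ n : ℕ, F n y with hΦdef
      have hΦge : ∀ n y, F n y ≤ Φ y := fun n y => le_ciSup (hFbdd y) n
      have hΦnn : ∀ y, 0 ≤ Φ y := fun y => le_trans (hFnn 0 y) (hΦge 0 y)
      have hΦzero : ∀ y ∉ N₀, Φ y = 0 := by
        intro y hy
        have hfe : (fun n => F n y) = fun _ => (0:ℝ) := by
          funext n
          simp only [hFdef]
          rw [if_neg (fun hcc => hy hcc.1)]
        simp only [hΦdef]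
        rw [hfe]
        exact ciSup_const
      have hΦmeas : Measurable Φ := by
        apply Measurable.iSup
        intro n
        apply Measurable.ite _ measurable_const measurable_const
        have : {y : ℝ | y ∈ N₀ ∧ M n < |y|} = N₀ ∩ {y | M n < |y|} := rfl
        rw [this]
        exact hN₀meas.inter (measurableSet_lt measurable_const continuous_abs.measurable)
      have hΦae0 : (fun y => Φ y * fℓ y) =ᶠ[ae volume] (fun _ => (0:ℝ)) := by
        filter_upwards [haeN₀] with y hy
        rw [hΦzero y hy, zero_mul]
      have hΦint : Integrable (fun y => Φ y * fℓ y) :=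
        (integrable_zero _ _ _).congr hΦae0.symm
      have hΦintzero : ∫ y, Φ y * fℓ y = 0 := integral_eq_zero_of_ae hΦae0
      -- the contradiction
      have htend := (hwLLN Φ hΦmeas hΦint 1 one_pos).eventually (gt_mem_nhds hε₀pos)
      obtain ⟨N₁, hN₁⟩ := eventually_atTop.mp htend
      obtain ⟨n₂, hn₂ge, hn₂⟩ := hfreq N₁
      have hn₂' : ε₀ < P {ω | 1 / ((mf n₂ : ℝ) + 1) ≤ ∑ i ∈ Finset.range n₂, w n₂ i ω *
          (if Y i ω ∈ N₀ ∧ M n₂ < |Y i ω| then (1:ℝ) else 0)} :=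
        hmf n₂ hn₂
      have hincl : {ω | 1 / ((mf n₂ : ℝ) + 1) ≤ ∑ i ∈ Finset.range n₂, w n₂ i ω *
          (if Y i ω ∈ N₀ ∧ M n₂ < |Y i ω| then (1:ℝ) else 0)}
          ⊆ {ω | 1 ≤ |∑ i ∈ Finset.range n₂, w n₂ i ω * Φ (Y i ω) - ∫ y, Φ y * fℓ y|} := by
        intro ω hω
        simp only [Set.mem_setOf_eq] at hω ⊢
        rw [hΦintzero, sub_zero]
        have hS1 : ∑ i ∈ Finset.range n₂, w n₂ i ω * F n₂ (Y i ω)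
            ≤ ∑ i ∈ Finset.range n₂, w n₂ i ω * Φ (Y i ω) := by
          apply Finset.sum_le_sum
          intro i _
          exact mul_le_mul_of_nonneg_left (hΦge n₂ (Y i ω)) (hwnn n₂ i ω)
        have hSF : ∑ i ∈ Finset.range n₂, w n₂ i ω * F n₂ (Y i ω)
            = ((mf n₂ : ℝ) + 1) * ∑ i ∈ Finset.range n₂, w n₂ i ω *
              (if Y i ω ∈ N₀ ∧ M n₂ < |Y i ω| then (1:ℝ) else 0) := by
          rw [Finset.mul_sum]
          apply Finset.sum_congr rfl
          intro i _
          simp only [hFdef]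
          split_ifs
          · ring
          · ring
        have hge1 : (1:ℝ) ≤ ∑ i ∈ Finset.range n₂, w n₂ i ω * F n₂ (Y i ω) := by
          rw [hSF]
          have hpos : (0:ℝ) < (mf n₂ : ℝ) + 1 := by positivity
          calc (1:ℝ) = ((mf n₂ : ℝ) + 1) * (1 / ((mf n₂ : ℝ) + 1)) := by field_simp
            _ ≤ ((mf n₂ : ℝ) + 1) * _ := by
                exact mul_le_mul_of_nonneg_left hω (le_of_lt hpos)
        have hSnn : 0 ≤ ∑ i ∈ Finset.range n₂, w n₂ i ω * Φ (Y i ω) :=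
          Finset.sum_nonneg fun i _ => mul_nonneg (hwnn n₂ i ω) (hΦnn (Y i ω))
        rw [abs_of_nonneg hSnn]
        linarith only [hge1, hS1]
      have := lt_of_lt_of_le hn₂' (measure_mono hincl)
      exact absurd this (not_lt.mpr (le_of_lt (hN₁ n₂ hn₂ge)))
    -- ### Part 9 : the probabilistic assembly
    rw [ENNReal.tendsto_atTop_zero]
    intro εP hεP
    set b : ℝ≥0∞ := min εP 1 with hbdef
    have hb0 : 0 < b := lt_min hεP zero_lt_one
    have hbtop : b ≠ ⊤ := ne_top_of_le_ne_top ENNReal.one_ne_top (min_le_right _ _)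
    set q : ℝ≥0∞ := b / 8 with hqdef
    have hq0 : 0 < q := ENNReal.div_pos hb0.ne' (by norm_num)
    have hqtop : q ≠ ⊤ := by
      simp only [hqdef]
      exact (ENNReal.div_lt_top hbtop (by norm_num)).ne
    set qG : ℝ≥0∞ := q / ((t.card : ℝ≥0∞) + 1) with hqGdef
    have hqG0 : 0 < qG := ENNReal.div_pos hq0.ne' (by
      exact (ENNReal.add_lt_top.mpr ⟨ENNReal.natCast_lt_top _, ENNReal.one_lt_top⟩).ne)
    -- the window event from hOp
    obtain ⟨Mb, hMbl⟩ := hOp q.toReal (ENNReal.toReal_pos hq0.ne' hqtop)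
    have hOpev : ∀ᶠ n in atTop,
        P {ω | ∃ y, |y| ≤ M n ∧ Mb * a n < |fexact n ω y - fbg y|} < q := by
      have h1 := eventually_lt_of_limsup_lt hMbl
      rwa [ENNReal.ofReal_toReal hqtop] at h1
    set K' : ℝ := |Mb| + 1 with hK'def
    have hK'pos : 0 < K' := by positivity
    have hK'1 : 1 ≤ K' := by
      simp only [hK'def]
      have := abs_nonneg Mb
      linarith only [this]
    have hMbK' : Mb ≤ K' := le_trans (le_abs_self Mb) (by simp only [hK'def]; linarith only [])
    -- deterministic eventualities
    have hevk : ∀ᶠ n in atTop, K' * r n ≤ αbar * c (M n) / 2 ∧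
        K' * r n / (αbar * c (M n) / 2) ≤ e0 := by
      set t₀ : ℝ := min (αbar / (2 * K')) (e0 * αbar / (2 * K')) with ht₀def
      have ht₀pos : 0 < t₀ := lt_min (by positivity) (by positivity)
      filter_upwards [hrc.eventually (gt_mem_nhds ht₀pos)] with n hn
      have hcn : 0 < c (M n) := hcpos (M n)
      have hrn : r n < t₀ * c (M n) := (div_lt_iff₀ hcn).mp hn
      have h1 : K' * r n ≤ K' * (t₀ * c (M n)) :=
        mul_le_mul_of_nonneg_left (le_of_lt hrn) (le_of_lt hK'pos)
      constructor
      · have h2 : t₀ ≤ αbar / (2 * K') := min_le_left _ _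
        have h3 : K' * (t₀ * c (M n)) ≤ K' * ((αbar / (2 * K')) * c (M n)) := by
          apply mul_le_mul_of_nonneg_left _ (le_of_lt hK'pos)
          exact mul_le_mul_of_nonneg_right h2 (le_of_lt hcn)
        have h4 : K' * ((αbar / (2 * K')) * c (M n)) = αbar * c (M n) / 2 := by
          field_simp
        exact le_of_le_of_eq (le_trans h1 h3) h4
      · have h2 : t₀ ≤ e0 * αbar / (2 * K') := min_le_right _ _
        have h3 : K' * (t₀ * c (M n)) ≤ K' * ((e0 * αbar / (2 * K')) * c (M n)) := by
          apply mul_le_mul_of_nonneg_left _ (le_of_lt hK'pos)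
          exact mul_le_mul_of_nonneg_right h2 (le_of_lt hcn)
        have h4 : K' * ((e0 * αbar / (2 * K')) * c (M n)) = e0 * (αbar * c (M n) / 2) := by
          field_simp
        rw [div_le_iff₀ (by positivity)]
        exact le_of_le_of_eq (le_trans h1 h3) h4
    have hevT : ∀ᶠ n in atTop, (T:ℝ) ≤ M n := hM.eventually (eventually_ge_atTop (T:ℝ))
    have hevNf : ∀ᶠ n in atTop, n ≥ Nf := eventually_ge_atTop Nf
    -- hwLLN eventualities
    have hevgrid : ∀ᶠ n in atTop, ∀ j ∈ t, P {ω | e0 ≤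
        |∑ i ∈ Finset.range n, w n i ω * Φg j (Y i ω) - ∫ y, Φg j y * fℓ y|} < qG := by
      rw [eventually_all_finset]
      intro j hj
      have hjP : j ∈ Pset := (htmem j hj).1
      exact (hwLLN (Φg j) (hΦgmeas j) (hΦgint j hjP) e0 hepos).eventually (gt_mem_nhds hqG0)
    have hevstar : ∀ᶠ n in atTop, P {ω | e0 ≤
        |∑ i ∈ Finset.range n, w n i ω * Φg pstar (Y i ω) - ∫ y, Φg pstar y * fℓ y|} < q :=
      (hwLLN (Φg pstar) (hΦgmeas pstar) (hΦgint pstar hpstarP) e0 hepos).eventually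
        (gt_mem_nhds hq0)
    have hone_int : Integrable (fun y => (fun _ : ℝ => (1:ℝ)) y * fℓ y) := by
      simpa using hfℓint
    have hevone : ∀ᶠ n in atTop, P {ω | 1 ≤
        |∑ i ∈ Finset.range n, w n i ω * (fun _ : ℝ => (1:ℝ)) (Y i ω)
          - ∫ y, (fun _ : ℝ => (1:ℝ)) y * fℓ y|} < q :=
      (hwLLN (fun _ => (1:ℝ)) measurable_const hone_int 1 one_pos).eventually
        (gt_mem_nhds hq0)
    have hevΨ : ∀ᶠ n in atTop, P {ω | e0 ≤
        |∑ i ∈ Finset.range n, w n i ω * ΦΨ (Y i ω) - ∫ y, ΦΨ y * fℓ y|} < q :=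
      (hwLLN ΦΨ hΦΨmeas hΦΨint e0 hepos).eventually (gt_mem_nhds hq0)
    have hevH : ∀ᶠ n in atTop, P {ω | e0 ≤
        |∑ i ∈ Finset.range n, w n i ω * ΦH (Y i ω) - ∫ y, ΦH y * fℓ y|} < q :=
      (hwLLN ΦH hΦHmeas hΦHint e0 hepos).eventually (gt_mem_nhds hq0)
    have hevA : ∀ᶠ n in atTop, P {ω | 0 < ∑ i ∈ Finset.range n, w n i ω *
        (if Y i ω ∈ N₀ ∧ M n < |Y i ω| then (1:ℝ) else 0)} < q :=
      hlemA.eventually (gt_mem_nhds hq0)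
    -- the final eventual bound
    have hfinal : ∀ᶠ n in atTop,
        P {ω | δ ≤ |θhat n ω - θstar| ∨ δ ≤ |αhat n ω - αstar|} ≤ εP := by
      filter_upwards [hevgrid, hevstar, hevone, hevΨ, hevH, hevA, hOpev, hevk, hevT, hevNf]
        with n hgrid hstar hone hΨev hHev hAev hOpn hkn hTn hNfn
      -- the eight exceptional events
      set E1 : Set Ω := ⋃ j ∈ t, {ω | e0 ≤
        |∑ i ∈ Finset.range n, w n i ω * Φg j (Y i ω) - ∫ y, Φg j y * fℓ y|} with hE1def
      set E2 : Set Ω := {ω | e0 ≤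
        |∑ i ∈ Finset.range n, w n i ω * Φg pstar (Y i ω) - ∫ y, Φg pstar y * fℓ y|}
        with hE2def
      set E3 : Set Ω := {ω | 1 ≤
        |∑ i ∈ Finset.range n, w n i ω * (fun _ : ℝ => (1:ℝ)) (Y i ω)
          - ∫ y, (fun _ : ℝ => (1:ℝ)) y * fℓ y|} with hE3def
      set E4 : Set Ω := {ω | e0 ≤
        |∑ i ∈ Finset.range n, w n i ω * ΦΨ (Y i ω) - ∫ y, ΦΨ y * fℓ y|} with hE4def
      set E5 : Set Ω := {ω | e0 ≤
        |∑ i ∈ Finset.range n, w n i ω * ΦH (Y i ω) - ∫ y, ΦH y * fℓ y|} with hE5def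
      set E6 : Set Ω := {ω | 0 < ∑ i ∈ Finset.range n, w n i ω *
        (if Y i ω ∈ N₀ ∧ M n < |Y i ω| then (1:ℝ) else 0)} with hE6def
      set E7 : Set Ω := {ω | ∃ y, |y| ≤ M n ∧ Mb * a n < |fexact n ω y - fbg y|} with hE7def
      set E8 : Set Ω := {ω | ¬ (∀ i ∈ Finset.range n, ∀ θ ∈ 𝒞,
        ∀ α ∈ Set.Icc αbar (1 - αbar),
        |Real.log (α * f₀ (Y i ω) θ + (1 - α) * fFFT n ω (Y i ω))| ≤ Hplug (Y i ω))}
        with hE8def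
      have hPE8 : P E8 = 0 := by
        rw [hE8def]
        exact ae_iff.mp (hHplugN n hNfn)
      -- the inclusion of the bad event into the union of exceptional events
      have hsub : {ω | δ ≤ |θhat n ω - θstar| ∨ δ ≤ |αhat n ω - αstar|}
          ⊆ E1 ∪ E2 ∪ E3 ∪ E4 ∪ E5 ∪ E6 ∪ E7 ∪ E8 := by
        intro ω hω
        by_contra hnot
        simp only [Set.mem_union, not_or] at hnot
        obtain ⟨⟨⟨⟨⟨⟨⟨hn1, hn2⟩, hn3⟩, hn4⟩, hn5⟩, hn6⟩, hn7⟩, hn8⟩ := hnot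
        -- extract the scalar facts
        simp only [hE2def, Set.mem_setOf_eq, not_le] at hn2
        simp only [hE3def, Set.mem_setOf_eq, not_le] at hn3
        simp only [hE4def, Set.mem_setOf_eq, not_le] at hn4
        simp only [hE5def, Set.mem_setOf_eq, not_le] at hn5
        simp only [hE6def, Set.mem_setOf_eq, not_lt] at hn6
        simp only [hE7def, Set.mem_setOf_eq, not_exists, not_and, not_lt] at hn7
        simp only [hE8def, Set.mem_setOf_eq, not_not] at hn8
        -- basic sums
        set Wt : ℝ := ∑ i ∈ Finset.range n, w n i ω with hWtdef
        have hWtnn : 0 ≤ Wt := Finset.sum_nonneg fun i _ => hwnn n i ω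
        have hWt2 : Wt ≤ 2 := by
          have h1 : ∫ y, (fun _ : ℝ => (1:ℝ)) y * fℓ y = 1 := by
            simpa using hfℓ1
          rw [h1] at hn3
          have h2 : ∑ i ∈ Finset.range n, w n i ω * (fun _ : ℝ => (1:ℝ)) (Y i ω) = Wt := by
            simp [hWtdef]
          rw [h2] at hn3
          have := abs_lt.mp hn3
          linarith only [this.1, this.2]
        set SΨ : ℝ := ∑ i ∈ Finset.range n, w n i ω * ΦΨ (Y i ω) with hSΨdef
        set SH : ℝ := ∑ i ∈ Finset.range n, w n i ω * ΦH (Y i ω) with hSHdef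
        have hSΨnn : 0 ≤ SΨ :=
          Finset.sum_nonneg fun i _ => mul_nonneg (hwnn n i ω) (hΦΨnn (Y i ω))
        have hSHnn : 0 ≤ SH :=
          Finset.sum_nonneg fun i _ => mul_nonneg (hwnn n i ω) (hΦHnn (Y i ω))
        have hSΨ2e : SΨ ≤ 2 * e0 := by
          have h1 := abs_lt.mp hn4
          have h2 : ∫ y, ΦΨ y * fℓ y < e0 := hTΨ
          linarith only [h1.1, h1.2, h2]
        have hSH2e : SH ≤ 2 * e0 := by
          have h1 := abs_lt.mp hn5
          have h2 : ∫ y, ΦH y * fℓ y < e0 := hTH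
          linarith only [h1.1, h1.2, h2]
        -- zero weights on null far-out samples
        have hw0 : ∀ i ∈ Finset.range n, Y i ω ∈ N₀ → M n < |Y i ω| → w n i ω = 0 := by
          intro i hi hN hMn
          have hzero : ∑ i ∈ Finset.range n, w n i ω *
              (if Y i ω ∈ N₀ ∧ M n < |Y i ω| then (1:ℝ) else 0) = 0 := by
            apply le_antisymm hn6
            exact Finset.sum_nonneg fun i _ => mul_nonneg (hwnn n i ω)
              (by split_ifs <;> norm_num)
          have hterm := (Finset.sum_eq_zero_iff_of_nonneg
            (fun i _ => mul_nonneg (hwnn n i ω) (by split_ifs <;> norm_num))).mp hzero i hi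
          rw [if_pos ⟨hN, hMn⟩, mul_one] at hterm
          exact hterm
        -- the window + tail comparison between plug-in and oracle sums
        have hcomp : ∀ p ∈ Pset,
            |(∑ i ∈ Finset.range n, w n i ω *
                Real.log (p.2 * f₀ (Y i ω) p.1 + (1 - p.2) * fFFT n ω (Y i ω)))
              - ∑ i ∈ Finset.range n, w n i ω * ψ p (Y i ω)|
            ≤ e0 * Wt + SH + SΨ := by
          intro p hp
          rw [← Finset.sum_sub_distrib]
          refine le_trans (Finset.abs_sum_le_sum_abs _ _) ?_
          have hstep : ∀ i ∈ Finset.range n,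
              |w n i ω * Real.log (p.2 * f₀ (Y i ω) p.1 + (1 - p.2) * fFFT n ω (Y i ω))
                - w n i ω * ψ p (Y i ω)|
              ≤ w n i ω * e0 + (w n i ω * ΦH (Y i ω) + w n i ω * ΦΨ (Y i ω)) := by
            intro i hi
            rw [← mul_sub, abs_mul, abs_of_nonneg (hwnn n i ω)]
            by_cases hwin : |Y i ω| ≤ M n
            · -- window case
              have hfd : |fFFT n ω (Y i ω) - fbg (Y i ω)| ≤ K' * r n := by
                have h1 := hFFTapprox n ω (Y i ω)
                have h2 := hn7 (Y i ω) hwin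
                have h3 : |fFFT n ω (Y i ω) - fbg (Y i ω)|
                    ≤ |fFFT n ω (Y i ω) - fexact n ω (Y i ω)|
                      + |fexact n ω (Y i ω) - fbg (Y i ω)| := abs_sub_le _ _ _
                have h4 : Mb * a n ≤ K' * a n :=
                  mul_le_mul_of_nonneg_right hMbK' (hann n)
                have h5 : ε n ≤ K' * ε n := le_mul_of_one_le_left (hεnn n) hK'1
                have h6 : K' * a n + K' * ε n = K' * r n := by rw [hrdef n]; ring
                linarith only [h1, h2, h3, h4, h5, h6]
              obtain ⟨hp1, hp2, hp3, hp4⟩ := hrange p hp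
              have horc : αbar * c (M n) ≤ p.2 * f₀ (Y i ω) p.1 + (1 - p.2) * fbg (Y i ω) :=
                harglow p hp (Y i ω) (M n) hwin
              have hdiffargs : |(p.2 * f₀ (Y i ω) p.1 + (1 - p.2) * fFFT n ω (Y i ω))
                  - (p.2 * f₀ (Y i ω) p.1 + (1 - p.2) * fbg (Y i ω))| ≤ K' * r n := by
                have hkey : (p.2 * f₀ (Y i ω) p.1 + (1 - p.2) * fFFT n ω (Y i ω))
                    - (p.2 * f₀ (Y i ω) p.1 + (1 - p.2) * fbg (Y i ω))
                    = (1 - p.2) * (fFFT n ω (Y i ω) - fbg (Y i ω)) := by ring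
                rw [hkey, abs_mul]
                calc |1 - p.2| * |fFFT n ω (Y i ω) - fbg (Y i ω)|
                    ≤ 1 * (K' * r n) := by
                      apply mul_le_mul _ hfd (abs_nonneg _) zero_le_one
                      rw [abs_of_nonneg hp3]
                      linarith only [hp1]
                  _ = K' * r n := one_mul _
              have hposm : (0:ℝ) < αbar * c (M n) / 2 :=
                div_pos (mul_pos hαbar (hcpos (M n))) two_pos
              have hplugge : αbar * c (M n) / 2
                  ≤ p.2 * f₀ (Y i ω) p.1 + (1 - p.2) * fFFT n ω (Y i ω) := by
                have hx := (abs_le.mp hdiffargs).1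
                have hy : (p.2 * f₀ (Y i ω) p.1 + (1 - p.2) * fbg (Y i ω)) - K' * r n
                    ≤ p.2 * f₀ (Y i ω) p.1 + (1 - p.2) * fFFT n ω (Y i ω) := by
                  have hz := add_le_add_right hx
                    (p.2 * f₀ (Y i ω) p.1 + (1 - p.2) * fbg (Y i ω))
                  calc (p.2 * f₀ (Y i ω) p.1 + (1 - p.2) * fbg (Y i ω)) - K' * r n
                      = -(K' * r n)
                        + (p.2 * f₀ (Y i ω) p.1 + (1 - p.2) * fbg (Y i ω)) := by ring
                    _ ≤ (p.2 * f₀ (Y i ω) p.1 + (1 - p.2) * fFFT n ω (Y i ω)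
                          - (p.2 * f₀ (Y i ω) p.1 + (1 - p.2) * fbg (Y i ω)))
                        + (p.2 * f₀ (Y i ω) p.1 + (1 - p.2) * fbg (Y i ω)) := by linarith only [hz]
                    _ = p.2 * f₀ (Y i ω) p.1 + (1 - p.2) * fFFT n ω (Y i ω) := by ring
                have hz2 : αbar * c (M n) / 2
                    ≤ (p.2 * f₀ (Y i ω) p.1 + (1 - p.2) * fbg (Y i ω)) - K' * r n := by
                  have h3 := sub_le_sub horc hkn.1
                  calc αbar * c (M n) / 2
                      = αbar * c (M n) - αbar * c (M n) / 2 := by ring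
                    _ ≤ _ := h3
                exact le_trans hz2 hy
              have horc2 : αbar * c (M n) / 2
                  ≤ p.2 * f₀ (Y i ω) p.1 + (1 - p.2) * fbg (Y i ω) :=
                le_trans (le_of_lt (by
                  have hh := mul_pos hαbar (hcpos (M n))
                  exact div_lt_self hh (by norm_num))) horc
              have hld := logdiff hposm hplugge horc2
              have hKe : K' * r n ≤ e0 * (αbar * c (M n) / 2) :=
                (div_le_iff₀ hposm).mp hkn.2
              have hldle : |Real.log (p.2 * f₀ (Y i ω) p.1 + (1 - p.2) * fFFT n ω (Y i ω))
                  - ψ p (Y i ω)| ≤ e0 := by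
                simp only [hψdef]
                refine le_trans hld ?_
                rw [div_le_iff₀ hposm]
                exact le_trans hdiffargs hKe
              have hRHSnn : 0 ≤ w n i ω * ΦH (Y i ω) + w n i ω * ΦΨ (Y i ω) :=
                add_nonneg (mul_nonneg (hwnn n i ω) (hΦHnn _))
                  (mul_nonneg (hwnn n i ω) (hΦΨnn _))
              have := mul_le_mul_of_nonneg_left hldle (hwnn n i ω)
              linarith only [this, hRHSnn]
            · -- tail case
              push_neg at hwin
              by_cases hYN : Y i ω ∈ N₀
              · have hw0i : w n i ω = 0 := hw0 i hi hYN hwin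
                rw [hw0i]
                simp only [zero_mul, abs_zero, zero_add, add_zero]
                positivity
              · have hHp : |Real.log (p.2 * f₀ (Y i ω) p.1 + (1 - p.2) * fFFT n ω (Y i ω))|
                    ≤ Hplug (Y i ω) := hn8 i hi p.1 hp.1 p.2 hp.2
                have hΨp : |ψ p (Y i ω)| ≤ Ψ (Y i ω) := hΨge p hp (Y i ω)
                have htri := abs_sub_le''
                  (Real.log (p.2 * f₀ (Y i ω) p.1 + (1 - p.2) * fFFT n ω (Y i ω)))
                  (ψ p (Y i ω))
                have hT1 : (T:ℝ) < |Y i ω| := lt_of_le_of_lt hTn hwin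
                have hΦHeq : ΦH (Y i ω) = H' (Y i ω) := by
                  simp only [hΦHdef]
                  rw [if_pos hT1]
                have hΦΨeq : ΦΨ (Y i ω) = Ψ (Y i ω) := by
                  simp only [hΦΨdef]
                  rw [if_pos hT1]
                have hHeq : H' (Y i ω) = Hplug (Y i ω) := hH'eq (Y i ω) hYN
                have hbd : |Real.log (p.2 * f₀ (Y i ω) p.1 + (1 - p.2) * fFFT n ω (Y i ω))
                    - ψ p (Y i ω)| ≤ ΦH (Y i ω) + ΦΨ (Y i ω) := by
                  rw [hΦHeq, hΦΨeq, hHeq]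
                  linarith only [htri, hHp, hΨp]
                have := mul_le_mul_of_nonneg_left hbd (hwnn n i ω)
                have hwe : 0 ≤ w n i ω * e0 :=
                  mul_nonneg (hwnn n i ω) (le_of_lt hepos)
                rw [mul_add] at this
                linarith only [this, hwe]
          refine le_trans (Finset.sum_le_sum hstep) ?_
          rw [Finset.sum_add_distrib, Finset.sum_add_distrib, ← Finset.sum_mul]
          simp only [← hWtdef, ← hSHdef, ← hSΨdef]
          linarith only [mul_comm Wt e0]
        -- truncation comparison for the oracle sums
        have htrunc : ∀ p ∈ Pset,
            |(∑ i ∈ Finset.range n, w n i ω * ψ p (Y i ω))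
              - ∑ i ∈ Finset.range n, w n i ω * Φg p (Y i ω)| ≤ SΨ := by
          intro p hp
          rw [← Finset.sum_sub_distrib]
          refine le_trans (Finset.abs_sum_le_sum_abs _ _) ?_
          rw [hSΨdef]
          apply Finset.sum_le_sum
          intro i _
          rw [← mul_sub, abs_mul, abs_of_nonneg (hwnn n i ω)]
          apply mul_le_mul_of_nonneg_left _ (hwnn n i ω)
          simp only [hΦgdef, hΦΨdef]
          split_ifs with hc
          · rw [sub_zero]
            exact hΨge p hp (Y i ω)
          · rw [sub_self, abs_zero]
        -- the maximizer
        set phat : ℝ × ℝ := (θhat n ω, αhat n ω) with hphatdef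
        have hphatP : phat ∈ Pset := ⟨(hmem n ω).1, (hmem n ω).2⟩
        have hphatSb : phat ∈ Sb := ⟨hphatP, hω⟩
        obtain ⟨j, hjb', hjball⟩ := Set.mem_iUnion₂.mp (hb'cov hphatSb)
        have hjt : j ∈ t := hb'fin.mem_toFinset.mpr hjb'
        have hjP : j ∈ Pset := (hb'sub hjb').1
        have hjSb : j ∈ Sb := hb'sub hjb'
        have hn1j : |∑ i ∈ Finset.range n, w n i ω * Φg j (Y i ω) - ∫ y, Φg j y * fℓ y|
            < e0 := by
          by_contra hge
          push_neg at hge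
          exact hn1 (Set.mem_biUnion hjt hge)
        -- modulus comparison between phat and j
        have hmodsum : |(∑ i ∈ Finset.range n, w n i ω * Φg phat (Y i ω))
            - ∑ i ∈ Finset.range n, w n i ω * Φg j (Y i ω)| ≤ e0 * Wt := by
          rw [← Finset.sum_sub_distrib]
          refine le_trans (Finset.abs_sum_le_sum_abs _ _) ?_
          have hstep : ∀ i ∈ Finset.range n,
              |w n i ω * Φg phat (Y i ω) - w n i ω * Φg j (Y i ω)| ≤ w n i ω * e0 := by
            intro i _
            rw [← mul_sub, abs_mul, abs_of_nonneg (hwnn n i ω)]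
            apply mul_le_mul_of_nonneg_left _ (hwnn n i ω)
            simp only [hΦgdef]
            split_ifs with hc
            · rw [sub_self, abs_zero]
              exact le_of_lt hepos
            · push_neg at hc
              exact hmod phat hphatP j hjP (Metric.mem_ball.mp hjball) (Y i ω) hc
          refine le_trans (Finset.sum_le_sum hstep) ?_
          rw [← Finset.sum_mul, ← hWtdef]
          linarith only [mul_comm Wt e0]
        -- gather the chain
        have hLhat : Ltil n ω (θhat n ω) (αhat n ω)
            = ∑ i ∈ Finset.range n, w n i ω *
              Real.log (phat.2 * f₀ (Y i ω) phat.1 + (1 - phat.2) * fFFT n ω (Y i ω)) := by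
          rw [hLtil n ω (θhat n ω) (αhat n ω)]
        have hLstar : Ltil n ω θstar αstar
            = ∑ i ∈ Finset.range n, w n i ω *
              Real.log (pstar.2 * f₀ (Y i ω) pstar.1 + (1 - pstar.2) * fFFT n ω (Y i ω)) := by
          rw [hLtil n ω θstar αstar]
        have hmax := hargmax n ω θstar hθstar αstar hαstarIcc
        have hcomphat := hcomp phat hphatP
        have hcompstar := hcomp pstar hpstarP
        have htrunchat := htrunc phat hphatP
        have htruncstar := htrunc pstar hpstarP
        have hIgj := hIg j hjP
        have hIgstar := hIg pstar hpstarP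
        have hps : Lor pstar.1 pstar.2 = Lor θstar αstar := rfl
        rw [hps] at hIgstar
        have hIΨe : ∫ y, ΦΨ y * fℓ y < e0 := hTΨ
        have hLorj : Lor j.1 j.2 ≤ mx := hp₀max hjSb
        have heWt : e0 * Wt ≤ 2 * e0 := by nlinarith only [hepos, hWt2, hWtnn]
        -- final contradiction via linarith
        have hb1 := abs_sub_le_iff.mp hcomphat
        have hb2 := abs_sub_le_iff.mp hcompstar
        have hb3 := abs_sub_le_iff.mp htrunchat
        have hb4 := abs_sub_le_iff.mp htruncstar
        have hb5 := abs_sub_le_iff.mp (le_of_lt hn1j)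
        have hb6 := abs_sub_le_iff.mp (le_of_lt hn2)
        have hb7 := abs_sub_le_iff.mp hIgj
        have hb8 := abs_sub_le_iff.mp hIgstar
        have hb9 := abs_sub_le_iff.mp hmodsum
        rw [hLhat] at hmax
        rw [hLstar] at hmax
        have hcontr : Lor θstar αstar - mx ≤ 22 * e0 := by
          linarith only [hb1.1, hb1.2, hb2.1, hb2.2, hb3.1, hb3.2, hb4.1, hb4.2,
            hb5.1, hb5.2, hb6.1, hb6.2, hb7.1, hb7.2, hb8.1, hb8.2, hb9.1, hb9.2,
            hmax, hSΨ2e, hSH2e, heWt, hIΨe, hLorj]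
        rw [hmxval] at hcontr
        linarith only [hcontr, hepos]
      -- measure bound
      have hPE1 : P E1 ≤ q := by
        rw [hE1def]
        refine le_trans (measure_biUnion_finset_le t _) ?_
        have h1 : ∀ j ∈ t, P {ω | e0 ≤
            |∑ i ∈ Finset.range n, w n i ω * Φg j (Y i ω) - ∫ y, Φg j y * fℓ y|} ≤ qG :=
          fun j hj => le_of_lt (hgrid j hj)
        refine le_trans (Finset.sum_le_card_nsmul t _ qG h1) ?_
        rw [nsmul_eq_mul, hqGdef]
        calc (t.card : ℝ≥0∞) * (q / ((t.card : ℝ≥0∞) + 1))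
            ≤ ((t.card : ℝ≥0∞) + 1) * (q / ((t.card : ℝ≥0∞) + 1)) := by
              apply mul_le_mul_left (le_add_of_nonneg_right zero_le_one)
          _ = q := ENNReal.mul_div_cancel'
              (by simp) (by simp [ENNReal.natCast_lt_top])
      calc P {ω | δ ≤ |θhat n ω - θstar| ∨ δ ≤ |αhat n ω - αstar|}
          ≤ P (E1 ∪ E2 ∪ E3 ∪ E4 ∪ E5 ∪ E6 ∪ E7 ∪ E8) := measure_mono hsub
        _ ≤ P (E1 ∪ E2 ∪ E3 ∪ E4 ∪ E5 ∪ E6 ∪ E7) + P E8 := measure_union_le _ _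
        _ ≤ (P (E1 ∪ E2 ∪ E3 ∪ E4 ∪ E5 ∪ E6) + P E7) + P E8 := by
            gcongr
            exact measure_union_le _ _
        _ ≤ ((P (E1 ∪ E2 ∪ E3 ∪ E4 ∪ E5) + P E6) + P E7) + P E8 := by
            gcongr
            exact measure_union_le _ _
        _ ≤ (((P (E1 ∪ E2 ∪ E3 ∪ E4) + P E5) + P E6) + P E7) + P E8 := by
            gcongr
            exact measure_union_le _ _
        _ ≤ ((((P (E1 ∪ E2 ∪ E3) + P E4) + P E5) + P E6) + P E7) + P E8 := by
            gcongr
            exact measure_union_le _ _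
        _ ≤ (((((P (E1 ∪ E2) + P E3) + P E4) + P E5) + P E6) + P E7) + P E8 := by
            gcongr
            exact measure_union_le _ _
        _ ≤ ((((((P E1 + P E2) + P E3) + P E4) + P E5) + P E6) + P E7) + P E8 := by
            gcongr
            exact measure_union_le _ _
        _ ≤ ((((((q + q) + q) + q) + q) + q) + q) + 0 :=
            add_le_add (add_le_add (add_le_add (add_le_add (add_le_add (add_le_add
              (add_le_add hPE1 (le_of_lt hstar)) (le_of_lt hone)) (le_of_lt hΨev))
              (le_of_lt hHev)) (le_of_lt hAev)) (le_of_lt hOpn)) (le_of_eq hPE8)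
        _ ≤ 8 * q := by
            rw [add_zero]
            have h7 : ((((((q + q) + q) + q) + q) + q) + q) = 7 * q := by ring
            rw [h7]
            exact mul_le_mul_left (by norm_num) q
        _ = b := by
            rw [hqdef]
            exact ENNReal.mul_div_cancel' (by norm_num) (by norm_num)
        _ ≤ εP := min_le_left _ _
    exact eventually_atTop.mp hfinal
end
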